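/- arXiv:1904.10346 — 4 statements merged into one kernel-verified Lean document; each statement's English description precedes it below -/
import Mathlib

section
/- For the van der Corput sequence S in base 2, and for every N ≥ 1, the star discrepancy satisfies D*_N(S) ≤ S₂(N)/N, where S₂(N) is the binary sum-of-digits function of N. In particular, if N is a power of 2 then D*_N(S) ≤ 1/N. -/
open scoped Classical

/-- The van der Corput sequence in base 2. -/
noncomputable def vdc (n : ℕ) : ℝ :=
  ∑ i ∈ Finset.range n.size, if n.testBit i then ((2 : ℝ) ^ (i + 1))⁻¹ else 0

/-- Star discrepancy of the first `N` terms of a sequence in `[0,1)`. -/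
noncomputable def starD (x : ℕ → ℝ) (N : ℕ) : ℝ :=
  ⨆ t : Set.Icc (0 : ℝ) 1,
    |(((Finset.range N).filter fun n => x n < (t : ℝ)).card : ℝ) / N - (t : ℝ)|

/- ### Auxiliary lemmas -/

lemma vdc_eq_sum (n K : ℕ) (h : n.size ≤ K) :
    vdc n = ∑ i ∈ Finset.range K, if n.testBit i then ((2 : ℝ) ^ (i + 1))⁻¹ else 0 := by
  rw [vdc]
  apply Finset.sum_subset (Finset.range_subset_range.2 h)
  intro i _ hi
  simp only [Finset.mem_range, not_lt] at hi
  rw [Nat.testBit_eq_false_of_lt]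
  · simp
  · calc n < 2 ^ n.size := Nat.lt_size_self n
      _ ≤ 2 ^ i := Nat.pow_le_pow_right (by norm_num) hi

lemma vdc_nonneg (n : ℕ) : 0 ≤ vdc n := by
  apply Finset.sum_nonneg
  intro i _
  split <;> positivity

lemma sum_geom_aux (K : ℕ) :
    (∑ i ∈ Finset.range K, ((2 : ℝ) ^ (i + 1))⁻¹) = 1 - ((2 : ℝ) ^ K)⁻¹ := by
  induction K with
  | zero => simp
  | succ K ih =>
    rw [Finset.sum_range_succ, ih, pow_succ]
    have h : (2 : ℝ) ^ K ≠ 0 := by positivity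
    field_simp
    ring

lemma vdc_lt_one (n : ℕ) : vdc n < 1 := by
  have h1 : vdc n ≤ ∑ i ∈ Finset.range n.size, ((2 : ℝ) ^ (i + 1))⁻¹ := by
    apply Finset.sum_le_sum
    intro i _
    split
    · exact le_rfl
    · positivity
  rw [sum_geom_aux] at h1
  have : (0 : ℝ) < ((2 : ℝ) ^ n.size)⁻¹ := by positivity
  linarith

lemma vdc_double (k b : ℕ) (hb : b < 2) : vdc (2 * k + b) = vdc k / 2 + b / 2 := by
  have hsize : (2 * k + b).size ≤ k.size + 1 := by
    rw [Nat.size_le]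
    have := Nat.lt_size_self k
    rw [pow_succ]
    omega
  rw [vdc_eq_sum _ _ hsize, Finset.sum_range_succ']
  have h0 : (2 * k + b).testBit 0 = decide (b = 1) := by
    rw [Nat.testBit_zero]
    congr 1
    simp only [eq_iff_iff]
    omega
  have hs : ∀ i, (2 * k + b).testBit (i + 1) = k.testBit i := by
    intro i
    rw [Nat.testBit_add_one]
    congr 1
    omega
  rw [h0, vdc]
  simp only [hs]
  rw [Finset.sum_div]
  congr 1
  · apply Finset.sum_congr rfl
    intro i _
    split
    · rw [pow_succ]
      rw [mul_inv]
      ring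
    · simp
  · interval_cases b <;> simp

lemma vdc_two_mul (k : ℕ) : vdc (2 * k) = vdc k / 2 := by
  have := vdc_double k 0 (by norm_num)
  simpa using this

lemma vdc_two_mul_add_one (k : ℕ) : vdc (2 * k + 1) = vdc k / 2 + 1 / 2 := by
  have := vdc_double k 1 (by norm_num)
  simpa using this

/-- The counting function of the van der Corput sequence. -/
noncomputable def vcnt (N : ℕ) (t : ℝ) : ℕ :=
  ((Finset.range N).filter fun n => vdc n < t).card

lemma vcnt_cast (N : ℕ) (t : ℝ) :
    (vcnt N t : ℝ) = ∑ n ∈ Finset.range N, if vdc n < t then (1 : ℝ) else 0 := by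
  rw [vcnt, Finset.card_filter]
  push_cast
  rfl

lemma sum_range_two_mul (m : ℕ) (f : ℕ → ℝ) :
    ∑ n ∈ Finset.range (2 * m), f n
      = ∑ k ∈ Finset.range m, f (2 * k) + ∑ k ∈ Finset.range m, f (2 * k + 1) := by
  induction m with
  | zero => simp
  | succ m ih =>
    have h2 : 2 * (m + 1) = (2 * m + 1) + 1 := by ring
    rw [h2, Finset.sum_range_succ, Finset.sum_range_succ, ih,
      Finset.sum_range_succ, Finset.sum_range_succ]
    ring

lemma vcnt_two_mul (m : ℕ) (t : ℝ) :
    (vcnt (2 * m) t : ℝ) = vcnt m (2 * t) + vcnt m (2 * t - 1) := by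
  rw [vcnt_cast, vcnt_cast, vcnt_cast, sum_range_two_mul]
  congr 1
  · apply Finset.sum_congr rfl
    intro k _
    have : vdc (2 * k) < t ↔ vdc k < 2 * t := by
      rw [vdc_two_mul]
      constructor <;> intro h <;> linarith
    simp [this]
  · apply Finset.sum_congr rfl
    intro k _
    have : vdc (2 * k + 1) < t ↔ vdc k < 2 * t - 1 := by
      rw [vdc_two_mul_add_one]
      constructor <;> intro h <;> linarith
    simp [this]

lemma vcnt_two_mul_add_one (m : ℕ) (t : ℝ) :
    (vcnt (2 * m + 1) t : ℝ)
      = vcnt m (2 * t) + vcnt m (2 * t - 1) + (if vdc m < 2 * t then (1 : ℝ) else 0) := by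
  rw [vcnt_cast, Finset.sum_range_succ, ← vcnt_cast, vcnt_two_mul]
  have : vdc (2 * m) < t ↔ vdc m < 2 * t := by
    rw [vdc_two_mul]
    constructor <;> intro h <;> linarith
  simp [this]

lemma vcnt_of_nonpos {t : ℝ} (m : ℕ) (h : t ≤ 0) : vcnt m t = 0 := by
  rw [vcnt, Finset.card_eq_zero, Finset.filter_eq_empty_iff]
  intro n _
  have := vdc_nonneg n
  intro hc
  linarith

lemma vcnt_of_one_le {t : ℝ} (m : ℕ) (h : 1 ≤ t) : vcnt m t = m := by
  rw [vcnt]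
  rw [Finset.filter_true_of_mem, Finset.card_range]
  intro n _
  have := vdc_lt_one n
  linarith

/-- Clamping to `[0,1]`. -/
noncomputable def clampI (t : ℝ) : ℝ := max 0 (min 1 t)

lemma clampI_eq_self {t : ℝ} (h0 : 0 ≤ t) (h1 : t ≤ 1) : clampI t = t := by
  rw [clampI, min_eq_right h1, max_eq_right h0]

lemma clampI_of_nonpos {t : ℝ} (h : t ≤ 0) : clampI t = 0 := by
  rw [clampI, min_eq_right (by linarith), max_eq_left h]

lemma clampI_of_one_le {t : ℝ} (h : 1 ≤ t) : clampI t = 1 := by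
  rw [clampI, min_eq_left h, max_eq_right (by norm_num)]

lemma clampI_nonneg (t : ℝ) : 0 ≤ clampI t := le_max_left _ _

lemma clampI_le_one (t : ℝ) : clampI t ≤ 1 := max_le (by norm_num) (min_le_left _ _)

lemma clampI_double (t : ℝ) : clampI (2 * t) + clampI (2 * t - 1) = 2 * clampI t := by
  simp only [clampI, max_def, min_def]
  split_ifs <;> linarith

lemma sumdig_step (N : ℕ) (h : N ≠ 0) :
    (Nat.digits 2 N).sum = N % 2 + (Nat.digits 2 (N / 2)).sum := by
  rw [Nat.digits_def' (by norm_num : 1 < 2) (Nat.pos_of_ne_zero h)]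
  simp

/-- The key discrepancy estimate for the van der Corput counting function. -/
lemma vdc_key (N : ℕ) : ∀ t : ℝ,
    |(vcnt N t : ℝ) - N * clampI t| ≤ ((Nat.digits 2 N).sum : ℝ) := by
  induction N using Nat.strong_induction_on with
  | _ N ih =>
  intro t
  rcases Nat.eq_zero_or_pos N with rfl | hpos
  · simp [vcnt]
  set m := N / 2 with hm
  have hmN : m < N := Nat.div_lt_self hpos one_lt_two
  have ihm := ih m hmN
  -- one of the two "halved" error terms always vanishes
  have hzero : ∀ s : ℝ, (1 : ℝ) / 2 ≤ |s - 1 / 2| →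
      ((vcnt m (2 * s) : ℝ) - m * clampI (2 * s)) = 0 ∨
      ((vcnt m (2 * s - 1) : ℝ) - m * clampI (2 * s - 1)) = 0 := by
    intro s hs
    rcases le_total s (1 / 2) with h | h
    · right
      rw [vcnt_of_nonpos m (by linarith), clampI_of_nonpos (by linarith)]
      simp
    · left
      rw [vcnt_of_one_le m (by linarith), clampI_of_one_le (by linarith)]
      simp
  have key2 : ∀ s : ℝ, |(vcnt m (2 * s) : ℝ) + (vcnt m (2 * s - 1) : ℝ)
      - m * (2 * clampI s)| ≤ ((Nat.digits 2 m).sum : ℝ) := by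
    intro s
    have hsum : (vcnt m (2 * s) : ℝ) + (vcnt m (2 * s - 1) : ℝ) - m * (2 * clampI s)
        = ((vcnt m (2 * s) : ℝ) - m * clampI (2 * s))
          + ((vcnt m (2 * s - 1) : ℝ) - m * clampI (2 * s - 1)) := by
      rw [← clampI_double]
      ring
    rw [hsum]
    rcases le_total s (1 / 2) with h | h
    · have h2 : ((vcnt m (2 * s - 1) : ℝ) - m * clampI (2 * s - 1)) = 0 := by
        rw [vcnt_of_nonpos m (by linarith), clampI_of_nonpos (by linarith)]
        simp
      rw [h2, add_zero]
      exact ihm (2 * s)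
    · have h2 : ((vcnt m (2 * s) : ℝ) - m * clampI (2 * s)) = 0 := by
        rw [vcnt_of_one_le m (by linarith), clampI_of_one_le (by linarith)]
        simp
      rw [h2, zero_add]
      exact ihm (2 * s - 1)
  have hsd : (Nat.digits 2 N).sum = N % 2 + (Nat.digits 2 m).sum :=
    sumdig_step N (by omega)
  rcases Nat.even_or_odd N with ⟨q, hq⟩ | ⟨q, hq⟩
  · -- even case
    have hNq : N = 2 * m := by omega
    have hmod : N % 2 = 0 := by omega
    rw [hNq, vcnt_two_mul]
    have : (↑(2 * m) : ℝ) * clampI t = m * (2 * clampI t) := by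
      push_cast
      ring
    rw [this]
    have := key2 t
    have hsd' : ((Nat.digits 2 N).sum : ℝ) = ((Nat.digits 2 m).sum : ℝ) := by
      rw [hsd, hmod]
      push_cast
      ring
    rw [hNq] at hsd'
    rw [hsd']
    exact this
  · -- odd case
    have hNq : N = 2 * m + 1 := by omega
    have hmod : N % 2 = 1 := by omega
    rw [hNq, vcnt_two_mul_add_one]
    have hrw : (↑(2 * m + 1) : ℝ) * clampI t = m * (2 * clampI t) + clampI t := by
      push_cast
      ring
    rw [hrw]
    have h1 := key2 t
    have h2 : |(if vdc m < 2 * t then (1 : ℝ) else 0) - clampI t| ≤ 1 := by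
      have := clampI_nonneg t
      have := clampI_le_one t
      rw [abs_le]
      split <;> constructor <;> linarith
    have hsd' : ((Nat.digits 2 N).sum : ℝ) = ((Nat.digits 2 m).sum : ℝ) + 1 := by
      rw [hsd, hmod]
      push_cast
      ring
    rw [hNq] at hsd'
    rw [hsd']
    calc |(vcnt m (2 * t) : ℝ) + (vcnt m (2 * t - 1) : ℝ)
          + (if vdc m < 2 * t then (1 : ℝ) else 0)
          - (m * (2 * clampI t) + clampI t)|
        ≤ |(vcnt m (2 * t) : ℝ) + (vcnt m (2 * t - 1) : ℝ) - m * (2 * clampI t)|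
          + |(if vdc m < 2 * t then (1 : ℝ) else 0) - clampI t| := by
          have : (vcnt m (2 * t) : ℝ) + (vcnt m (2 * t - 1) : ℝ)
              + (if vdc m < 2 * t then (1 : ℝ) else 0)
              - (m * (2 * clampI t) + clampI t)
              = ((vcnt m (2 * t) : ℝ) + (vcnt m (2 * t - 1) : ℝ) - m * (2 * clampI t))
                + ((if vdc m < 2 * t then (1 : ℝ) else 0) - clampI t) := by ring
          rw [this]
          exact abs_add_le _ _
      _ ≤ ((Nat.digits 2 m).sum : ℝ) + 1 := add_le_add h1 h2

lemma digits_sum_two_pow (k : ℕ) : (Nat.digits 2 (2 ^ k)).sum = 1 := by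
  induction k with
  | zero => simp
  | succ k ih =>
    rw [sumdig_step _ (by positivity)]
    have h1 : 2 ^ (k + 1) % 2 = 0 := by
      rw [pow_succ]
      omega
    have h2 : 2 ^ (k + 1) / 2 = 2 ^ k := by
      rw [pow_succ]
      omega
    rw [h1, h2, ih]

/-- For the van der Corput sequence in base 2, `D*_N ≤ S₂(N)/N`, where `S₂(N)` is the
binary sum-of-digits of `N`; in particular `D*_N ≤ 1/N` when `N` is a power of two. -/
theorem vdc_starD_le_sumDigits (N : ℕ) (hN : 1 ≤ N) :
    starD vdc N ≤ ((Nat.digits 2 N).sum : ℝ) / N ∧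
    (∀ k : ℕ, N = 2 ^ k → starD vdc N ≤ 1 / N) := by
  have hNpos : (0 : ℝ) < N := by
    have : (1 : ℝ) ≤ N := by exact_mod_cast hN
    linarith
  have main : starD vdc N ≤ ((Nat.digits 2 N).sum : ℝ) / N := by
    rw [starD]
    have hne : Nonempty (Set.Icc (0 : ℝ) 1) := ⟨⟨0, by constructor <;> norm_num⟩⟩
    apply ciSup_le
    rintro ⟨t, ht0, ht1⟩
    simp only
    have hkey := vdc_key N t
    rw [clampI_eq_self ht0 ht1] at hkey
    have heq : (((Finset.range N).filter fun n => vdc n < t).card : ℝ) / N - t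
        = ((vcnt N t : ℝ) - N * t) / N := by
      rw [vcnt]
      field_simp
    rw [heq, abs_div, abs_of_pos hNpos]
    gcongr
  refine ⟨main, fun k hk => ?_⟩
  have : (Nat.digits 2 N).sum = 1 := by
    rw [hk]
    exact digits_sum_two_pow k
  calc starD vdc N ≤ ((Nat.digits 2 N).sum : ℝ) / N := main
    _ = 1 / N := by rw [this]; norm_num
end

section
/- (Koksma's inequality, one-dimensional Koksma–Hlawka) For every function f : [0,1] → ℝ of bounded variation V(f) and every finite sequence x₀, …, x_{N−1} in [0,1), one has |∫₀¹ f(x) dx − (1/N) Σ_{n=0}^{N−1} f(x_n)| ≤ V(f) · D*_N, where D*_N is the star discrepancy of the point set. -/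
open scoped Classical
open Set intervalIntegral MeasureTheory

set_option maxHeartbeats 1000000 in
private lemma mono_koksma (φ : ℝ → ℝ) (hφ : MonotoneOn φ (Set.Icc 0 1))
    (N : ℕ) (hN : 0 < N) (y : ℕ → ℝ)
    (hy : ∀ k < N, y k ∈ Set.Icc (0:ℝ) 1)
    (D : ℝ) (hD0 : 0 ≤ D)
    (h1 : ∀ k < N, y k ≤ (k : ℝ)/N + D)
    (h2 : ∀ k < N, ((k : ℝ)+1)/N - D ≤ y k) :
    |(∫ t in (0:ℝ)..1, φ t) - (1/(N:ℝ)) * ∑ k ∈ Finset.range N, φ (y k)| ≤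
      (φ 1 - φ 0) * D := by
  have hN' : (0:ℝ) < N := by exact_mod_cast hN
  set ψ : ℝ → ℝ := fun t => φ (max 0 (min 1 t)) with hψ
  have hclamp : ∀ t : ℝ, max 0 (min 1 t) ∈ Set.Icc (0:ℝ) 1 :=
    fun t => ⟨le_max_left _ _, max_le zero_le_one (min_le_left _ _)⟩
  have hmono : Monotone ψ := fun a b hab =>
    hφ (hclamp a) (hclamp b) (max_le_max le_rfl (min_le_min le_rfl hab))
  have hψeq : ∀ t ∈ Set.Icc (0:ℝ) 1, ψ t = φ t := by
    intro t ht
    simp only [hψ]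
    rw [min_eq_right ht.2, max_eq_right ht.1]
  have hψ0 : ψ 0 = φ 0 := hψeq 0 ⟨le_rfl, zero_le_one⟩
  have hψ1 : ψ 1 = φ 1 := hψeq 1 ⟨zero_le_one, le_rfl⟩
  have hlow : ∀ t ≤ (0:ℝ), ψ t = φ 0 := by
    intro t ht
    simp only [hψ]
    rw [min_eq_right (ht.trans zero_le_one), max_eq_left ht]
  have hhigh : ∀ t : ℝ, 1 ≤ t → ψ t = φ 1 := by
    intro t ht
    simp only [hψ]
    rw [min_eq_left ht, max_eq_right zero_le_one]
  have hub : ∀ t : ℝ, ψ t ≤ φ 1 := by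
    intro t
    calc ψ t ≤ ψ (max 1 t) := hmono (le_max_right _ _)
    _ = φ 1 := hhigh _ (le_max_left _ _)
  have hlb : ∀ t : ℝ, φ 0 ≤ ψ t := by
    intro t
    calc φ 0 = ψ (min 0 t) := (hlow _ (min_le_left _ _)).symm
    _ ≤ ψ t := hmono (min_le_right _ _)
  have hint : ∀ (g : ℝ → ℝ), Monotone g → ∀ a b : ℝ, IntervalIntegrable g volume a b :=
    fun g hg a b => hg.intervalIntegrable
  have hintψ : ∀ a b : ℝ, IntervalIntegrable ψ volume a b := hint ψ hmono
  have hmono_sub : Monotone (fun t => ψ (t - D)) :=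
    fun a b hab => hmono (by linarith)
  have hmono_add : Monotone (fun t => ψ (t + D)) :=
    fun a b hab => hmono (by linarith)
  -- replace φ by ψ in the integral
  have hIeq : (∫ t in (0:ℝ)..1, φ t) = ∫ t in (0:ℝ)..1, ψ t := by
    refine (intervalIntegral.integral_congr ?_).symm
    rw [Set.uIcc_of_le zero_le_one]
    exact hψeq
  -- partition points
  set a : ℕ → ℝ := fun k => (k : ℝ) / N with ha
  have ha_mono : ∀ k, a k ≤ a (k + 1) := by
    intro k
    refine (div_le_div_iff_of_pos_right hN').mpr ?_
    push_cast; linarith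
  have ha0 : a 0 = 0 := by simp [ha]
  have haN : a N = 1 := by simp only [ha]; exact div_self hN'.ne'
  have hstep : ∀ k : ℕ, a (k + 1) - a k = 1 / N := by
    intro k; simp only [ha]; push_cast; field_simp; ring
  -- the error as a sum of integrals
  have key : ∀ (k : ℕ), k < N →
      (∫ t in a k..a (k+1), ψ t) - (1/(N:ℝ)) * φ (y k)
        = ∫ t in a k..a (k+1), (ψ t - ψ (y k)) := by
    intro k hk
    rw [intervalIntegral.integral_sub (hintψ _ _) (intervalIntegrable_const)]
    rw [intervalIntegral.integral_const, hstep k, smul_eq_mul]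
    rw [hψeq _ (hy k hk)]
    try ring
  have hsplit : (∫ t in (0:ℝ)..1, ψ t) = ∑ k ∈ Finset.range N, ∫ t in a k..a (k+1), ψ t := by
    rw [intervalIntegral.sum_integral_adjacent_intervals (fun k _ => hintψ _ _), ha0, haN]
  have herr : (∫ t in (0:ℝ)..1, φ t) - (1/(N:ℝ)) * ∑ k ∈ Finset.range N, φ (y k)
      = ∑ k ∈ Finset.range N, ∫ t in a k..a (k+1), (ψ t - ψ (y k)) := by
    rw [hIeq, hsplit, Finset.mul_sum, ← Finset.sum_sub_distrib]
    exact Finset.sum_congr rfl fun k hk => key k (Finset.mem_range.mp hk)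
  -- upper bound
  have hupper : (∫ t in (0:ℝ)..1, φ t) - (1/(N:ℝ)) * ∑ k ∈ Finset.range N, φ (y k)
      ≤ (φ 1 - φ 0) * D := by
    rw [herr]
    have step1 : ∑ k ∈ Finset.range N, (∫ t in a k..a (k+1), (ψ t - ψ (y k)))
        ≤ ∑ k ∈ Finset.range N, ∫ t in a k..a (k+1), (ψ t - ψ (t - D)) := by
      refine Finset.sum_le_sum fun k hk => ?_
      have hk' := Finset.mem_range.mp hk
      refine intervalIntegral.integral_mono_on (ha_mono k)
        ((hintψ _ _).sub intervalIntegrable_const)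
        ((hintψ _ _).sub (hint _ hmono_sub _ _)) ?_
      intro t ht
      have : t - D ≤ y k := by
        have := h2 k hk'
        have ht2 := ht.2
        simp only [ha] at ht2
        push_cast at ht2
        linarith
      have := hmono this
      linarith
    have step2 : ∑ k ∈ Finset.range N, (∫ t in a k..a (k+1), (ψ t - ψ (t - D)))
        = (∫ t in (0:ℝ)..1, ψ t) - ∫ t in (-D)..(1-D), ψ t := by
      rw [intervalIntegral.sum_integral_adjacent_intervals
        (fun k _ => (hintψ _ _).sub (hint _ hmono_sub _ _)), ha0, haN]
      rw [intervalIntegral.integral_sub (hintψ _ _) (hint _ hmono_sub _ _)]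
      congr 1
      have := intervalIntegral.integral_comp_sub_right (a := (0:ℝ)) (b := 1) ψ D
      rw [this]; norm_num
    have id1 : (∫ t in (-D)..(0:ℝ), ψ t) + (∫ t in (0:ℝ)..1, ψ t) = ∫ t in (-D)..1, ψ t :=
      intervalIntegral.integral_add_adjacent_intervals (hintψ _ _) (hintψ _ _)
    have id2 : (∫ t in (-D)..(1-D:ℝ), ψ t) + (∫ t in (1-D)..(1:ℝ), ψ t) = ∫ t in (-D)..1, ψ t :=
      intervalIntegral.integral_add_adjacent_intervals (hintψ _ _) (hintψ _ _)
    have bd1 : (∫ t in (1-D)..(1:ℝ), ψ t) ≤ D * φ 1 := by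
      calc (∫ t in (1-D)..(1:ℝ), ψ t) ≤ ∫ t in (1-D)..(1:ℝ), φ 1 := by
            refine intervalIntegral.integral_mono_on (by linarith) (hintψ _ _)
              intervalIntegrable_const fun t _ => hub t
      _ = D * φ 1 := by rw [intervalIntegral.integral_const, smul_eq_mul]; ring_nf
    have bd2 : (∫ t in (-D)..(0:ℝ), ψ t) = D * φ 0 := by
      have : (∫ t in (-D)..(0:ℝ), ψ t) = ∫ t in (-D)..(0:ℝ), φ 0 := by
        refine intervalIntegral.integral_congr ?_
        rw [Set.uIcc_of_le (by linarith : -D ≤ (0:ℝ))]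
        exact fun t ht => hlow t ht.2
      rw [this, intervalIntegral.integral_const, smul_eq_mul]; ring_nf
    calc ∑ k ∈ Finset.range N, (∫ t in a k..a (k+1), (ψ t - ψ (y k)))
        ≤ (∫ t in (0:ℝ)..1, ψ t) - ∫ t in (-D)..(1-D), ψ t := step1.trans_eq step2
      _ = (∫ t in (1-D)..(1:ℝ), ψ t) - (∫ t in (-D)..(0:ℝ), ψ t) := by linarith
      _ ≤ D * φ 1 - D * φ 0 := by linarith [bd1, bd2.ge]
      _ = (φ 1 - φ 0) * D := by ring
  -- lower bound
  have hlower : -((φ 1 - φ 0) * D)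
      ≤ (∫ t in (0:ℝ)..1, φ t) - (1/(N:ℝ)) * ∑ k ∈ Finset.range N, φ (y k) := by
    rw [herr]
    have step1 : ∑ k ∈ Finset.range N, (∫ t in a k..a (k+1), (ψ t - ψ (t + D)))
        ≤ ∑ k ∈ Finset.range N, ∫ t in a k..a (k+1), (ψ t - ψ (y k)) := by
      refine Finset.sum_le_sum fun k hk => ?_
      have hk' := Finset.mem_range.mp hk
      refine intervalIntegral.integral_mono_on (ha_mono k)
        ((hintψ _ _).sub (hint _ hmono_add _ _))
        ((hintψ _ _).sub intervalIntegrable_const) ?_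
      intro t ht
      have : y k ≤ t + D := by
        have := h1 k hk'
        have ht1 := ht.1
        simp only [ha] at ht1
        linarith
      have := hmono this
      linarith
    have step2 : ∑ k ∈ Finset.range N, (∫ t in a k..a (k+1), (ψ t - ψ (t + D)))
        = (∫ t in (0:ℝ)..1, ψ t) - ∫ t in D..(1+D), ψ t := by
      rw [intervalIntegral.sum_integral_adjacent_intervals
        (fun k _ => (hintψ _ _).sub (hint _ hmono_add _ _)), ha0, haN]
      rw [intervalIntegral.integral_sub (hintψ _ _) (hint _ hmono_add _ _)]
      congr 1
      have := intervalIntegral.integral_comp_add_right (a := (0:ℝ)) (b := 1) ψ D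
      rw [this]; norm_num
    have id1 : (∫ t in (0:ℝ)..D, ψ t) + (∫ t in D..(1+D:ℝ), ψ t) = ∫ t in (0:ℝ)..(1+D), ψ t :=
      intervalIntegral.integral_add_adjacent_intervals (hintψ _ _) (hintψ _ _)
    have id2 : (∫ t in (0:ℝ)..(1:ℝ), ψ t) + (∫ t in (1:ℝ)..(1+D:ℝ), ψ t)
        = ∫ t in (0:ℝ)..(1+D), ψ t :=
      intervalIntegral.integral_add_adjacent_intervals (hintψ _ _) (hintψ _ _)
    have bd1 : D * φ 0 ≤ ∫ t in (0:ℝ)..D, ψ t := by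
      calc D * φ 0 = ∫ t in (0:ℝ)..D, φ 0 := by
            rw [intervalIntegral.integral_const, smul_eq_mul]; ring_nf
      _ ≤ ∫ t in (0:ℝ)..D, ψ t := by
            refine intervalIntegral.integral_mono_on hD0 intervalIntegrable_const
              (hintψ _ _) fun t _ => hlb t
    have bd2 : (∫ t in (1:ℝ)..(1+D:ℝ), ψ t) = D * φ 1 := by
      have : (∫ t in (1:ℝ)..(1+D:ℝ), ψ t) = ∫ t in (1:ℝ)..(1+D:ℝ), φ 1 := by
        refine intervalIntegral.integral_congr ?_
        rw [Set.uIcc_of_le (by linarith : (1:ℝ) ≤ 1 + D)]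
        exact fun t ht => hhigh t ht.1
      rw [this, intervalIntegral.integral_const, smul_eq_mul]; ring_nf
    calc -((φ 1 - φ 0) * D) = D * φ 0 - D * φ 1 := by ring
      _ ≤ (∫ t in (0:ℝ)..D, ψ t) - (∫ t in (1:ℝ)..(1+D:ℝ), ψ t) := by linarith [bd1, bd2.le]
      _ = (∫ t in (0:ℝ)..1, ψ t) - ∫ t in D..(1+D), ψ t := by linarith
      _ = ∑ k ∈ Finset.range N, (∫ t in a k..a (k+1), (ψ t - ψ (t + D))) := step2.symm
      _ ≤ _ := step1
  exact abs_le.mpr ⟨hlower, hupper⟩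

/-- Koksma's inequality (one-dimensional Koksma–Hlawka): for `f : [0,1] → ℝ` of bounded
variation `V(f)` and points `x₀,…,x_{N-1}` in `[0,1)`, the QMC integration error is at
most `V(f) · D*_N`. -/
theorem koksma_inequality (f : ℝ → ℝ) (hf : BoundedVariationOn f (Set.Icc 0 1))
    (N : ℕ) (hN : 0 < N) (x : Fin N → ℝ) (hx : ∀ n, x n ∈ Set.Ico (0 : ℝ) 1) :
    |(∫ t in (0 : ℝ)..1, f t) - (1 / N) * ∑ n, f (x n)| ≤
      (eVariationOn f (Set.Icc 0 1)).toReal *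
        ⨆ t : Set.Icc (0 : ℝ) 1,
          |((Finset.univ.filter fun n => x n < (t : ℝ)).card : ℝ) / N - (t : ℝ)| := by
  have hN' : (0:ℝ) < N := by exact_mod_cast hN
  have h0s : (0:ℝ) ∈ Set.Icc (0:ℝ) 1 := ⟨le_rfl, zero_le_one⟩
  have h1s : (1:ℝ) ∈ Set.Icc (0:ℝ) 1 := ⟨zero_le_one, le_rfl⟩
  set D : ℝ := ⨆ t : Set.Icc (0 : ℝ) 1,
      |((Finset.univ.filter fun n => x n < (t : ℝ)).card : ℝ) / N - (t : ℝ)| with hD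
  -- D bounds all discrepancies
  have hbdd : BddAbove (Set.range fun t : Set.Icc (0 : ℝ) 1 =>
      |((Finset.univ.filter fun n => x n < (t : ℝ)).card : ℝ) / N - (t : ℝ)|) := by
    refine ⟨2, ?_⟩
    rintro _ ⟨t, rfl⟩
    have hcard : ((Finset.univ.filter fun n => x n < (t:ℝ)).card : ℝ) ≤ N := by
      have := Finset.card_filter_le Finset.univ (fun n => x n < (t:ℝ))
      have h2 : (Finset.univ : Finset (Fin N)).card = N := by simp
      exact_mod_cast h2 ▸ this
    have hcard0 : (0:ℝ) ≤ ((Finset.univ.filter fun n => x n < (t:ℝ)).card : ℝ) := by positivity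
    have ht1 := t.2.1
    have ht2 := t.2.2
    have hq1 : ((Finset.univ.filter fun n => x n < (t:ℝ)).card : ℝ) / N ≤ 1 := by
      rw [div_le_one hN']; exact hcard
    have hq0 : (0:ℝ) ≤ ((Finset.univ.filter fun n => x n < (t:ℝ)).card : ℝ) / N :=
      div_nonneg hcard0 hN'.le
    rw [abs_le]; constructor <;> linarith
  have hDle : ∀ t : ℝ, t ∈ Set.Icc (0:ℝ) 1 →
      |((Finset.univ.filter fun n => x n < t).card : ℝ) / N - t| ≤ D :=
    fun t ht => le_ciSup hbdd (⟨t, ht⟩ : Set.Icc (0:ℝ) 1)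
  have hD0 : 0 ≤ D := (abs_nonneg _).trans (hDle 0 h0s)
  -- sorted points
  set σ : Equiv.Perm (Fin N) := Tuple.sort x with hσ
  set y : Fin N → ℝ := x ∘ σ with hy
  have hymono : Monotone y := Tuple.monotone_sort x
  have hyIco : ∀ n, y n ∈ Set.Ico (0:ℝ) 1 := fun n => hx (σ n)
  have hyx : ∀ c : ℝ, (Finset.univ.filter fun n => y n < c).card
      = (Finset.univ.filter fun n => x n < c).card := by
    intro c
    refine Finset.card_bij (fun n _ => σ n) ?_ ?_ ?_
    · intro a ha
      simp only [Finset.mem_filter, Finset.mem_univ, true_and] at ha ⊢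
      exact ha
    · intro a _ b _ h
      exact σ.injective h
    · intro b hb
      refine ⟨σ.symm b, ?_, by simp⟩
      simp only [Finset.mem_filter, Finset.mem_univ, true_and] at hb ⊢
      simpa [hy] using hb
  have hsum : ∑ n, f (x n) = ∑ n, f (y n) := (Equiv.sum_comp σ (fun n => f (x n))).symm
  -- per-point discrepancy bounds
  have bound1 : ∀ n : Fin N, y n ≤ (n : ℝ)/N + D := by
    intro n
    have hA : ((Finset.univ.filter fun m => x m < y n).card : ℝ) ≤ (n : ℝ) := by
      rw [← hyx]
      have hsub : (Finset.univ.filter fun m => y m < y n) ⊆ Finset.Iio n := by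
        intro m hm
        simp only [Finset.mem_filter, Finset.mem_univ, true_and] at hm
        rw [Finset.mem_Iio]
        by_contra h
        push_neg at h
        exact absurd (hymono h) (not_le.mpr hm)
      have := (Finset.card_le_card hsub).trans_eq (Fin.card_Iio n)
      exact_mod_cast this
    have hDn := hDle (y n) ⟨(hyIco n).1, (hyIco n).2.le⟩
    have h1 : y n - ((Finset.univ.filter fun m => x m < y n).card : ℝ)/N ≤ D := by
      have := neg_abs_le (((Finset.univ.filter fun m => x m < y n).card : ℝ)/N - y n)
      linarith
    have h2 : ((Finset.univ.filter fun m => x m < y n).card : ℝ)/N ≤ (n:ℝ)/N :=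
      div_le_div_of_nonneg_right hA hN'.le
    linarith
  have bound2 : ∀ n : Fin N, ((n : ℝ)+1)/N - D ≤ y n := by
    intro n
    have key : ∀ ε > (0:ℝ), ((n : ℝ)+1)/N - y n ≤ D + ε := by
      intro ε hε
      set t : ℝ := min 1 (y n + ε) with htdef
      have hts : t ∈ Set.Icc (0:ℝ) 1 :=
        ⟨le_min zero_le_one (by linarith [(hyIco n).1]), min_le_left _ _⟩
      have hlt : y n < t := lt_min (hyIco n).2 (by linarith)
      have hA : ((n:ℝ) + 1) ≤ ((Finset.univ.filter fun m => x m < t).card : ℝ) := by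
        rw [← hyx]
        have hsub : Finset.Iic n ⊆ (Finset.univ.filter fun m => y m < t) := by
          intro m hm
          rw [Finset.mem_Iic] at hm
          simp only [Finset.mem_filter, Finset.mem_univ, true_and]
          exact lt_of_le_of_lt (hymono hm) hlt
        have := (Fin.card_Iic n) ▸ Finset.card_le_card hsub
        exact_mod_cast this
      have hDt := hDle t hts
      have h1 : ((Finset.univ.filter fun m => x m < t).card : ℝ)/N - t ≤ D :=
        (le_abs_self _).trans hDt
      have h2 : ((n:ℝ)+1)/N ≤ ((Finset.univ.filter fun m => x m < t).card : ℝ)/N :=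
        div_le_div_of_nonneg_right hA hN'.le
      have h3 : t ≤ y n + ε := min_le_right _ _
      linarith
    have := le_of_forall_pos_le_add key
    linarith
  -- Jordan-type decomposition f = p - q with increments summing to the variation
  have hlbv : LocallyBoundedVariationOn f (Set.Icc 0 1) := hf.locallyBoundedVariationOn
  set v : ℝ → ℝ := fun t => variationOnFromTo f (Set.Icc 0 1) 0 t with hv
  have hvar : ∀ a b : ℝ, a ∈ Set.Icc (0:ℝ) 1 → b ∈ Set.Icc (0:ℝ) 1 → a ≤ b →
      |f b - f a| ≤ v b - v a := by
    intro a b ha hb hab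
    have h1 : v a + variationOnFromTo f (Set.Icc 0 1) a b = v b :=
      variationOnFromTo.add hlbv h0s ha hb
    have h2 : |f b - f a| ≤ variationOnFromTo f (Set.Icc 0 1) a b := by
      rw [← Real.dist_eq, dist_edist, variationOnFromTo.eq_of_le f _ hab]
      refine ENNReal.toReal_mono (hlbv a b ha hb) ?_
      exact eVariationOn.edist_le f ⟨hb, hab, le_rfl⟩ ⟨ha, le_rfl, hab⟩
    linarith
  set p : ℝ → ℝ := fun t => (v t + f t)/2 with hp
  set q : ℝ → ℝ := fun t => (v t - f t)/2 with hq
  have hpmono : MonotoneOn p (Set.Icc 0 1) := by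
    intro a ha b hb hab
    have h1 := hvar a b ha hb hab
    have h2 : f a - f b ≤ |f b - f a| := by rw [abs_sub_comm]; exact le_abs_self _
    simp only [hp]
    linarith
  have hqmono : MonotoneOn q (Set.Icc 0 1) := by
    intro a ha b hb hab
    have h1 := hvar a b ha hb hab
    have h2 : f b - f a ≤ |f b - f a| := le_abs_self _
    simp only [hq]
    linarith
  have hfeq : ∀ t : ℝ, f t = p t - q t := by
    intro t; simp only [hp, hq]; ring
  have hv0 : v 0 = 0 := variationOnFromTo.self f _ 0
  have hv1 : v 1 = (eVariationOn f (Set.Icc 0 1)).toReal := by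
    simp only [hv]
    rw [variationOnFromTo.eq_of_le f _ zero_le_one, Set.inter_self]
  -- interval integrability
  have hpi : IntervalIntegrable p MeasureTheory.volume 0 1 := by
    apply MonotoneOn.intervalIntegrable
    rwa [Set.uIcc_of_le zero_le_one]
  have hqi : IntervalIntegrable q MeasureTheory.volume 0 1 := by
    apply MonotoneOn.intervalIntegrable
    rwa [Set.uIcc_of_le zero_le_one]
  have hIf : (∫ t in (0:ℝ)..1, f t) = (∫ t in (0:ℝ)..1, p t) - ∫ t in (0:ℝ)..1, q t := by
    rw [← intervalIntegral.integral_sub hpi hqi]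
    exact intervalIntegral.integral_congr fun t _ => hfeq t
  have hSf : ∑ n, f (y n) = (∑ n, p (y n)) - ∑ n, q (y n) := by
    rw [← Finset.sum_sub_distrib]
    exact Finset.sum_congr rfl fun n _ => hfeq (y n)
  -- pass to ℕ-indexed points and apply the monotone lemma
  set yk : ℕ → ℝ := fun k => if h : k < N then y ⟨k, h⟩ else 0 with hyk
  have hykeq : ∀ (k : ℕ) (h : k < N), yk k = y ⟨k, h⟩ := by
    intro k h; simp only [hyk, dif_pos h]
  have hyIcc : ∀ k < N, yk k ∈ Set.Icc (0:ℝ) 1 := by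
    intro k h
    rw [hykeq k h]
    exact ⟨(hyIco _).1, (hyIco _).2.le⟩
  have hb1 : ∀ k < N, yk k ≤ (k : ℝ)/N + D := by
    intro k h
    rw [hykeq k h]
    simpa using bound1 ⟨k, h⟩
  have hb2 : ∀ k < N, ((k : ℝ)+1)/N - D ≤ yk k := by
    intro k h
    rw [hykeq k h]
    simpa using bound2 ⟨k, h⟩
  have hsum_p : ∑ k ∈ Finset.range N, p (yk k) = ∑ n, p (y n) := by
    rw [← Fin.sum_univ_eq_sum_range (fun k => p (yk k)) N]
    exact Finset.sum_congr rfl fun n _ => by rw [hykeq n n.isLt]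
  have hsum_q : ∑ k ∈ Finset.range N, q (yk k) = ∑ n, q (y n) := by
    rw [← Fin.sum_univ_eq_sum_range (fun k => q (yk k)) N]
    exact Finset.sum_congr rfl fun n _ => by rw [hykeq n n.isLt]
  have Ep := mono_koksma p hpmono N hN yk hyIcc D hD0 hb1 hb2
  have Eq' := mono_koksma q hqmono N hN yk hyIcc D hD0 hb1 hb2
  rw [hsum_p] at Ep
  rw [hsum_q] at Eq'
  -- combine
  have hVsum : (p 1 - p 0) + (q 1 - q 0) = (eVariationOn f (Set.Icc 0 1)).toReal := by
    simp only [hp, hq]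
    rw [← hv1]
    have := hv0
    linarith
  have habs : ∀ A B : ℝ, |A - B| ≤ |A| + |B| := by
    intro A B
    calc |A - B| = |A + (-B)| := by ring_nf
      _ ≤ |A| + |-B| := abs_add_le _ _
      _ = |A| + |B| := by rw [abs_neg]
  calc |(∫ t in (0:ℝ)..1, f t) - (1/(N:ℝ)) * ∑ n, f (x n)|
      = |((∫ t in (0:ℝ)..1, p t) - (1/(N:ℝ)) * ∑ n, p (y n))
          - ((∫ t in (0:ℝ)..1, q t) - (1/(N:ℝ)) * ∑ n, q (y n))| := by
        rw [hsum, hIf, hSf]; congr 1; ring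
    _ ≤ |(∫ t in (0:ℝ)..1, p t) - (1/(N:ℝ)) * ∑ n, p (y n)|
          + |(∫ t in (0:ℝ)..1, q t) - (1/(N:ℝ)) * ∑ n, q (y n)| := habs _ _
    _ ≤ (p 1 - p 0) * D + (q 1 - q 0) * D := add_le_add Ep Eq'
    _ = ((p 1 - p 0) + (q 1 - q 0)) * D := by ring
    _ = (eVariationOn f (Set.Icc 0 1)).toReal * D := by rw [hVsum]
end

section
/- (Roth's lower bound for L₂ discrepancy) For every dimension s ≥ 2 there exists a constant c_s > 0 such that for every N ≥ 2 and every N-point set P in [0,1)^s, the L₂ discrepancy satisfies L_{2,N}(P) ≥ c_s (log N)^{(s−1)/2} / N. -/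
open scoped Classical
set_option maxRecDepth 4000
set_option maxHeartbeats 1000000
open MeasureTheory Set intervalIntegral

noncomputable section RothAux

/-- dyadic interval of level `k`, index `a` -/
def dyI (k a : ℕ) : Set ℝ := Set.Ico ((a : ℝ) / 2 ^ k) ((a + 1 : ℝ) / 2 ^ k)

/-- 1D Haar-type function -/
def haar1 (k a : ℕ) : ℝ → ℝ := fun t =>
  (dyI (k + 1) (2 * a)).indicator 1 t - (dyI (k + 1) (2 * a + 1)).indicator 1 t

lemma dyI_meas (k a : ℕ) : MeasurableSet (dyI k a) := measurableSet_Ico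

lemma measurable_haar1 (k a : ℕ) : Measurable (haar1 k a) :=
  ((measurable_const.indicator (dyI_meas _ _)).sub
    (measurable_const.indicator (dyI_meas _ _)))

lemma two_pow_pos' (k : ℕ) : (0:ℝ) < 2 ^ k := by positivity

lemma cast_div_pow (p k k' : ℕ) (h : k ≤ k') :
    ((p : ℝ)) / 2 ^ k = ((p * 2 ^ (k' - k) : ℕ) : ℝ) / 2 ^ k' := by
  rw [div_eq_div_iff (two_pow_pos' k).ne' (two_pow_pos' k').ne']
  push_cast
  rw [mul_assoc, ← pow_add]
  congr 2
  omega

lemma div_pow_le_div_pow {p q : ℕ} (k : ℕ) (h : p ≤ q) :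
    (p : ℝ) / 2 ^ k ≤ (q : ℝ) / 2 ^ k := by
  gcongr

lemma mem_dyI_iff {k a : ℕ} {t : ℝ} :
    t ∈ dyI k a ↔ (a : ℝ) / 2 ^ k ≤ t ∧ t < ((a : ℝ) + 1) / 2 ^ k := Iff.rfl

lemma lt_of_div_lt_div {p q : ℕ} {k : ℕ}
    (h : (p : ℝ) / 2 ^ k < (q : ℝ) / 2 ^ k) : p < q := by
  by_contra hc
  push_neg at hc
  exact absurd (div_pow_le_div_pow k hc) (not_le.mpr h)

/-- membership in a coarser dyadic interval is constant on a finer one -/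
lemma mem_dyI_iff_of_le {k b k' a' : ℕ} (h : k ≤ k') {t : ℝ} (ht : t ∈ dyI k' a') :
    t ∈ dyI k b ↔ (b * 2 ^ (k' - k) ≤ a' ∧ a' + 1 ≤ (b + 1) * 2 ^ (k' - k)) := by
  obtain ⟨hl, hr⟩ := ht
  have eqL : (b : ℝ) / 2 ^ k = ((b * 2 ^ (k' - k) : ℕ) : ℝ) / 2 ^ k' := cast_div_pow b k k' h
  have eqR : ((b : ℝ) + 1) / 2 ^ k = (((b + 1) * 2 ^ (k' - k) : ℕ) : ℝ) / 2 ^ k' := by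
    have := cast_div_pow (b + 1) k k' h
    push_cast at this ⊢; linarith
  constructor
  · rintro ⟨h1, h2⟩
    rw [eqL] at h1; rw [eqR] at h2
    constructor
    · have : (b * 2 ^ (k' - k) : ℕ) < a' + 1 := by
        have := lt_of_div_lt_div (k := k') (p := b * 2 ^ (k' - k)) (q := a' + 1)
          (by push_cast; push_cast at h1; linarith)
        omega
      omega
    · have : a' < (b + 1) * 2 ^ (k' - k) := by
        apply lt_of_div_lt_div (k := k')
        calc (a' : ℝ) / 2 ^ k' ≤ t := hl
        _ < (((b + 1) * 2 ^ (k' - k) : ℕ) : ℝ) / 2 ^ k' := h2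
      omega
  · rintro ⟨h1, h2⟩
    constructor
    · rw [eqL]
      calc ((b * 2 ^ (k' - k) : ℕ) : ℝ) / 2 ^ k' ≤ (a' : ℝ) / 2 ^ k' := div_pow_le_div_pow _ h1
      _ ≤ t := hl
    · rw [eqR]
      have h3 := div_pow_le_div_pow (p := a' + 1) (q := (b + 1) * 2 ^ (k' - k)) k' h2
      push_cast at h3 ⊢
      linarith

lemma dyI_subset_of_le {k a k' a' : ℕ} (h : k ≤ k')
    (h1 : a * 2 ^ (k' - k) ≤ a') (h2 : a' + 1 ≤ (a + 1) * 2 ^ (k' - k)) :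
    dyI k' a' ⊆ dyI k a := fun t ht => (mem_dyI_iff_of_le h ht).mpr ⟨h1, h2⟩

lemma dyI_left_subset (k a : ℕ) : dyI (k + 1) (2 * a) ⊆ dyI k a :=
  dyI_subset_of_le (Nat.le_succ k) (by simp [show k+1-k = 1 from by omega]; omega) (by simp [show k+1-k = 1 from by omega]; omega)

lemma dyI_right_subset (k a : ℕ) : dyI (k + 1) (2 * a + 1) ⊆ dyI k a :=
  dyI_subset_of_le (Nat.le_succ k) (by simp [show k+1-k = 1 from by omega]; omega) (by simp [show k+1-k = 1 from by omega]; omega)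

lemma haar1_eq_zero_of_not_mem {k a : ℕ} {t : ℝ} (ht : t ∉ dyI k a) : haar1 k a t = 0 := by
  have h1 : t ∉ dyI (k + 1) (2 * a) := fun h => ht (dyI_left_subset k a h)
  have h2 : t ∉ dyI (k + 1) (2 * a + 1) := fun h => ht (dyI_right_subset k a h)
  simp [haar1, Set.indicator_of_notMem, h1, h2]

lemma dyI_disjoint {k a a' : ℕ} (h : a ≠ a') : dyI k a ∩ dyI k a' = ∅ := by
  apply Set.eq_empty_of_forall_notMem
  rintro t ⟨⟨h1, h2⟩, ⟨h3, h4⟩⟩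
  have c1 : a < a' + 1 := lt_of_div_lt_div (by push_cast; linarith)
  have c2 : a' < a + 1 := lt_of_div_lt_div (by push_cast; linarith)
  omega

lemma abs_haar1_le (k a : ℕ) (t : ℝ) : |haar1 k a t| ≤ 1 := by
  unfold haar1
  by_cases h1 : t ∈ dyI (k + 1) (2 * a) <;> by_cases h2 : t ∈ dyI (k + 1) (2 * a + 1) <;>
    simp [Set.indicator_of_mem, Set.indicator_of_notMem, h1, h2]

end RothAux

noncomputable section RothAux2

lemma dyI_volume (k a : ℕ) : (volume (dyI k a)).toReal = 1 / 2 ^ k := by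
  rw [dyI, Real.volume_Ico, ENNReal.toReal_ofReal (by rw [sub_nonneg]; gcongr; linarith)]
  field_simp
  ring

lemma integrable_indicator_dyI (k a : ℕ) :
    MeasureTheory.Integrable ((dyI k a).indicator (1 : ℝ → ℝ)) := by
  rw [MeasureTheory.integrable_indicator_iff (dyI_meas k a)]
  refine MeasureTheory.integrableOn_const ?_
  rw [dyI, Real.volume_Ico]
  exact ENNReal.ofReal_ne_top

lemma integrable_haar1 (k a : ℕ) : MeasureTheory.Integrable (haar1 k a) :=
  (integrable_indicator_dyI _ _).sub (integrable_indicator_dyI _ _)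

lemma integral_indicator_dyI (k a : ℕ) :
    ∫ t, (dyI k a).indicator (1 : ℝ → ℝ) t = 1 / 2 ^ k := by
  rw [MeasureTheory.integral_indicator_one (dyI_meas k a), MeasureTheory.measureReal_def, dyI_volume]

lemma integral_haar1 (k a : ℕ) : ∫ t, haar1 k a t = 0 := by
  unfold haar1
  rw [MeasureTheory.integral_sub (integrable_indicator_dyI _ _) (integrable_indicator_dyI _ _),
    integral_indicator_dyI, integral_indicator_dyI, sub_self]

lemma integral_id_dyI (k a : ℕ) :
    ∫ t, ((dyI k a).indicator (fun u => u) t) = (((a:ℝ)+1)^2 - (a:ℝ)^2) / 2 / 4 ^ k := by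
  rw [MeasureTheory.integral_indicator (dyI_meas k a), dyI,
    MeasureTheory.integral_Ico_eq_integral_Ioo,
    ← MeasureTheory.integral_Ioc_eq_integral_Ioo,
    ← intervalIntegral.integral_of_le (by gcongr <;> linarith)]
  rw [show ∫ x in (a:ℝ)/2^k..((a:ℝ)+1)/2^k, x = ((((a:ℝ)+1)/2^k) ^ 2 - ((a:ℝ)/2^k) ^ 2) / 2 from integral_id]
  rw [div_pow, div_pow, div_sub_div_same]
  have : ((2:ℝ)^k)^2 = 4^k := by
    rw [← pow_mul, show (4:ℝ) = 2^2 by norm_num, ← pow_mul]; ring_nf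
  rw [this]
  ring

lemma integrable_id_indicator_dyI (k a : ℕ) :
    MeasureTheory.Integrable ((dyI k a).indicator (fun u : ℝ => u)) := by
  rw [MeasureTheory.integrable_indicator_iff (dyI_meas k a)]
  exact (continuous_id.integrableOn_Icc (a := (a:ℝ)/2^k) (b := ((a:ℝ)+1)/2^k)).mono_set
    Set.Ico_subset_Icc_self

/-- `t * haar1 k a t` as indicators -/
lemma id_mul_haar1 (k a : ℕ) : (fun t => t * haar1 k a t) =
    fun t => (dyI (k+1) (2*a)).indicator (fun u => u) t
      - (dyI (k+1) (2*a+1)).indicator (fun u => u) t := by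
  funext t
  unfold haar1
  by_cases h1 : t ∈ dyI (k + 1) (2 * a) <;> by_cases h2 : t ∈ dyI (k + 1) (2 * a + 1) <;>
    simp [Set.indicator_of_mem, Set.indicator_of_notMem, h1, h2]

lemma integrable_id_mul_haar1 (k a : ℕ) :
    MeasureTheory.Integrable (fun t => t * haar1 k a t) := by
  rw [id_mul_haar1]
  exact (integrable_id_indicator_dyI _ _).sub (integrable_id_indicator_dyI _ _)

lemma integral_id_mul_haar1 (k a : ℕ) :
    ∫ t, t * haar1 k a t = -(1 / 4 ^ (k + 1)) := by
  rw [id_mul_haar1,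
    MeasureTheory.integral_sub (integrable_id_indicator_dyI _ _) (integrable_id_indicator_dyI _ _),
    integral_id_dyI, integral_id_dyI]
  push_cast
  field_simp
  ring

lemma haar1_sq (k a : ℕ) : (fun t => haar1 k a t * haar1 k a t) =
    fun t => (dyI (k+1) (2*a)).indicator (1 : ℝ → ℝ) t
      + (dyI (k+1) (2*a+1)).indicator (1 : ℝ → ℝ) t := by
  funext t
  unfold haar1
  by_cases h1 : t ∈ dyI (k + 1) (2 * a) <;> by_cases h2 : t ∈ dyI (k + 1) (2 * a + 1) <;>
    simp [Set.indicator_of_mem, Set.indicator_of_notMem, h1, h2]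
  exact absurd (Set.mem_inter h1 h2) (by rw [dyI_disjoint (by omega)]; simp)

lemma integrable_haar1_sq (k a : ℕ) :
    MeasureTheory.Integrable (fun t => haar1 k a t * haar1 k a t) := by
  rw [haar1_sq]; exact (integrable_indicator_dyI _ _).add (integrable_indicator_dyI _ _)

lemma integral_haar1_sq (k a : ℕ) : ∫ t, haar1 k a t * haar1 k a t = 1 / 2 ^ k := by
  rw [haar1_sq,
    MeasureTheory.integral_add (integrable_indicator_dyI _ _) (integrable_indicator_dyI _ _),
    integral_indicator_dyI, integral_indicator_dyI]
  field_simp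
  ring

end RothAux2

noncomputable section RothAux3

lemma not_mem_dyI_cases {k a : ℕ} {c : ℝ} (hc : c ∉ dyI k a) :
    c < (a : ℝ) / 2 ^ k ∨ ((a : ℝ) + 1) / 2 ^ k ≤ c := by
  rw [mem_dyI_iff] at hc
  push_neg at hc
  by_cases h : (a : ℝ) / 2 ^ k ≤ c
  · exact Or.inr (hc h)
  · exact Or.inl (not_le.mp h)

lemma integrable_ind_mul_haar1 (c : ℝ) (k a : ℕ) :
    MeasureTheory.Integrable (fun t => (if c < t then (1:ℝ) else 0) * haar1 k a t) :=
  (integrable_haar1 k a).bdd_mul (c := 1)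
    ((Measurable.ite measurableSet_Ioi measurable_const measurable_const).aestronglyMeasurable)
    (Filter.Eventually.of_forall fun t => by by_cases h : c < t <;> simp [h])

lemma integral_ind_mul_haar1 {c : ℝ} {k a : ℕ} (hc : c ∉ dyI k a) :
    ∫ t, (if c < t then (1:ℝ) else 0) * haar1 k a t = 0 := by
  rcases not_mem_dyI_cases hc with h | h
  · have : (fun t => (if c < t then (1:ℝ) else 0) * haar1 k a t) = fun t => haar1 k a t := by
      funext t
      by_cases ht : t ∈ dyI k a
      · rw [if_pos (h.trans_le ht.1), one_mul]
      · rw [haar1_eq_zero_of_not_mem ht, mul_zero]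
    rw [this, integral_haar1]
  · have : (fun t => (if c < t then (1:ℝ) else 0) * haar1 k a t) = fun _ => (0:ℝ) := by
      funext t
      by_cases ht : t ∈ dyI k a
      · rw [if_neg (by push_neg; exact le_of_lt (ht.2.trans_le h)), zero_mul]
      · rw [haar1_eq_zero_of_not_mem ht, mul_zero]
    rw [this, MeasureTheory.integral_zero]

lemma haar1_const_on {k a k' a' : ℕ} (h : k + 1 ≤ k') :
    ∃ c : ℝ, ∀ t ∈ dyI k' a', haar1 k a t = c := by
  refine ⟨(if 2*a * 2 ^ (k' - (k+1)) ≤ a' ∧ a' + 1 ≤ (2*a + 1) * 2 ^ (k' - (k+1))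
      then (1:ℝ) else 0)
    - (if (2*a+1) * 2 ^ (k' - (k+1)) ≤ a' ∧ a' + 1 ≤ (2*a+1+1) * 2 ^ (k' - (k+1))
      then (1:ℝ) else 0), ?_⟩
  intro t ht
  unfold haar1
  rw [Set.indicator_apply, Set.indicator_apply,
    if_congr (mem_dyI_iff_of_le h ht) rfl rfl, if_congr (mem_dyI_iff_of_le h ht) rfl rfl]
  simp

lemma integrable_haar1_mul_haar1 (k a k' a' : ℕ) :
    MeasureTheory.Integrable (fun t => haar1 k a t * haar1 k' a' t) :=
  (integrable_haar1 k' a').bdd_mul (c := 1) (measurable_haar1 k a).aestronglyMeasurable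
    (Filter.Eventually.of_forall fun t => by rw [Real.norm_eq_abs]; exact abs_haar1_le k a t)

lemma integral_haar1_mul_haar1_of_lt {k a k' a' : ℕ} (h : k < k') :
    ∫ t, haar1 k a t * haar1 k' a' t = 0 := by
  obtain ⟨c, hc⟩ := haar1_const_on (k' := k') (a' := a') (a := a) (Nat.succ_le_of_lt h)
  have : (fun t => haar1 k a t * haar1 k' a' t) = fun t => c * haar1 k' a' t := by
    funext t
    by_cases ht : t ∈ dyI k' a'
    · rw [hc t ht]
    · rw [haar1_eq_zero_of_not_mem ht, mul_zero, mul_zero]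
  rw [this, MeasureTheory.integral_const_mul, integral_haar1, mul_zero]

lemma integral_haar1_mul_haar1_of_ne {k a k' a' : ℕ} (hne : ¬(k = k' ∧ a = a')) :
    ∫ t, haar1 k a t * haar1 k' a' t = 0 := by
  rcases Nat.lt_trichotomy k k' with h | h | h
  · exact integral_haar1_mul_haar1_of_lt h
  · subst h
    have ha : a ≠ a' := fun hh => hne ⟨rfl, hh⟩
    have : (fun t => haar1 k a t * haar1 k a' t) = fun _ => (0:ℝ) := by
      funext t
      by_cases ht : t ∈ dyI k a
      · have hx : t ∉ dyI k a' := by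
          intro ht'
          have hmem : t ∈ dyI k a ∩ dyI k a' := ⟨ht, ht'⟩
          rw [dyI_disjoint ha] at hmem
          exact absurd hmem (Set.notMem_empty t)
        rw [haar1_eq_zero_of_not_mem hx, mul_zero]
      · rw [haar1_eq_zero_of_not_mem ht, zero_mul]
    rw [this, MeasureTheory.integral_zero]
  · have h2 := integral_haar1_mul_haar1_of_lt (k := k') (a := a') (k' := k) (a' := a) h
    rw [show (fun t => haar1 k a t * haar1 k' a' t) = fun t => haar1 k' a' t * haar1 k a t
      from funext fun t => mul_comm _ _]
    exact h2

lemma dyI_subset_Ico {k a : ℕ} (h : a < 2 ^ k) : dyI k a ⊆ Set.Ico (0:ℝ) 1 := by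
  intro t ⟨h1, h2⟩
  constructor
  · exact le_trans (by positivity) h1
  · refine h2.trans_le ?_
    rw [div_le_one (two_pow_pos' k)]
    have : (a : ℝ) + 1 ≤ ((2:ℝ))^k := by
      have : (a + 1 : ℕ) ≤ 2 ^ k := h
      exact_mod_cast this
    simpa using this

lemma mem_dyI_floor {k : ℕ} {u : ℝ} (h0 : 0 ≤ u) (h1 : u < 1) :
    ∃ a : ℕ, a < 2 ^ k ∧ u ∈ dyI k a := by
  refine ⟨⌊u * 2 ^ k⌋.toNat, ?_, ?_, ?_⟩
  · have h2 : (⌊u * 2 ^ k⌋ : ℝ) ≤ u * 2 ^ k := Int.floor_le _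
    have h4 : u * 2 ^ k < 2 ^ k := by nlinarith [two_pow_pos' k]
    have h5 : (⌊u * 2 ^ k⌋ : ℝ) < ((2 ^ k : ℕ) : ℝ) := by push_cast; linarith
    have h6 : ⌊u * 2 ^ k⌋ < ((2 ^ k : ℕ) : ℤ) := by exact_mod_cast h5
    have h3 : (0:ℤ) ≤ ⌊u * 2 ^ k⌋ := Int.floor_nonneg.mpr (by positivity)
    have h7 : ((⌊u * 2 ^ k⌋.toNat : ℕ) : ℤ) < ((2 ^ k : ℕ) : ℤ) := by
      rw [Int.toNat_of_nonneg h3]; exact h6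
    exact_mod_cast h7
  · rw [div_le_iff₀ (two_pow_pos' k)]
    have h3 : (0:ℤ) ≤ ⌊u * 2 ^ k⌋ := Int.floor_nonneg.mpr (by positivity)
    have : ((⌊u * 2 ^ k⌋.toNat : ℤ) : ℝ) = (⌊u * 2 ^ k⌋ : ℝ) := by
      rw [Int.toNat_of_nonneg h3]
    rw [show ((⌊u * 2 ^ k⌋.toNat : ℕ) : ℝ) = ((⌊u * 2 ^ k⌋.toNat : ℤ) : ℝ) by push_cast; ring, this]
    exact Int.floor_le _
  · rw [lt_div_iff₀ (two_pow_pos' k)]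
    have h3 : (0:ℤ) ≤ ⌊u * 2 ^ k⌋ := Int.floor_nonneg.mpr (by positivity)
    have heq : ((⌊u * 2 ^ k⌋.toNat : ℕ) : ℝ) = (⌊u * 2 ^ k⌋ : ℝ) := by
      rw [show ((⌊u * 2 ^ k⌋.toNat : ℕ) : ℝ) = ((⌊u * 2 ^ k⌋.toNat : ℤ) : ℝ) by push_cast; ring,
        Int.toNat_of_nonneg h3]
    rw [heq]
    exact Int.lt_floor_add_one _

end RothAux3

noncomputable section RothMulti

variable {s : ℕ}

/-- product Haar function -/
def bigH (r a : Fin s → ℕ) : (Fin s → ℝ) → ℝ := fun t => ∏ j, haar1 (r j) (a j) (t j)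

def boxes (r : Fin s → ℕ) : Finset (Fin s → ℕ) :=
  Fintype.piFinset fun j => Finset.range (2 ^ (r j))

def cube (s : ℕ) : Set (Fin s → ℝ) := Set.univ.pi fun _ : Fin s => Set.Icc (0:ℝ) 1

lemma cube_meas : MeasurableSet (cube s) :=
  MeasurableSet.univ_pi fun _ => measurableSet_Icc

lemma measurable_bigH (r a : Fin s → ℕ) : Measurable (bigH r a) := by
  apply Finset.measurable_prod
  intro j _
  exact (measurable_haar1 (r j) (a j)).comp (measurable_pi_apply j)

lemma abs_bigH_le (r a : Fin s → ℕ) (t : Fin s → ℝ) : |bigH r a t| ≤ 1 := by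
  rw [bigH, Finset.abs_prod]
  apply Finset.prod_le_one (fun j _ => abs_nonneg _) (fun j _ => abs_haar1_le _ _ _)

lemma bigH_eq_zero_of_not_mem_cube {r a : Fin s → ℕ} (ha : a ∈ boxes r)
    {t : Fin s → ℝ} (ht : t ∉ cube s) : bigH r a t = 0 := by
  rw [cube, Set.mem_univ_pi] at ht
  push_neg at ht
  obtain ⟨j, hj⟩ := ht
  apply Finset.prod_eq_zero (Finset.mem_univ j)
  apply haar1_eq_zero_of_not_mem
  intro hmem
  rw [boxes, Fintype.mem_piFinset] at ha
  have := dyI_subset_Ico (Finset.mem_range.mp (ha j)) hmem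
  exact hj ⟨this.1, this.2.le⟩

/-- integral over cube equals full integral for functions vanishing outside -/
lemma setIntegral_cube_eq {f : (Fin s → ℝ) → ℝ} (hf : ∀ t ∉ cube s, f t = 0) :
    ∫ t in cube s, f t = ∫ t, f t := by
  rw [← MeasureTheory.integral_indicator cube_meas]
  congr 1
  funext t
  by_cases ht : t ∈ cube s
  · rw [Set.indicator_of_mem ht]
  · rw [Set.indicator_of_notMem ht, hf t ht]

lemma integrable_on_cube {f : (Fin s → ℝ) → ℝ} (hm : Measurable f) (C : ℝ)
    (hb : ∀ t ∈ cube s, |f t| ≤ C) : MeasureTheory.IntegrableOn f (cube s) := by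
  have : IsFiniteMeasure (volume.restrict (cube s)) := by
    constructor
    rw [Measure.restrict_apply_univ]
    rw [cube, volume_pi_pi]
    simp [Real.volume_Icc]
  refine MeasureTheory.Integrable.mono' (integrable_const C) hm.aestronglyMeasurable ?_
  filter_upwards [MeasureTheory.ae_restrict_mem cube_meas] with t ht
  rw [Real.norm_eq_abs]
  exact hb t ht

lemma fubini_prod (F : Fin s → ℝ → ℝ) :
    ∫ t : Fin s → ℝ, ∏ j, F j (t j) = ∏ j, ∫ u : ℝ, F j u :=
  MeasureTheory.integral_fintype_prod_eq_prod (ι := Fin s) F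

lemma integral_bigH_mul_bigH {r a r' a' : Fin s → ℕ} (h : ¬(r = r' ∧ a = a')) :
    ∫ t : Fin s → ℝ, bigH r a t * bigH r' a' t = 0 := by
  have hrw : (fun t : Fin s → ℝ => bigH r a t * bigH r' a' t) =
      fun t => ∏ j, (fun (j : Fin s) (u : ℝ) => haar1 (r j) (a j) u * haar1 (r' j) (a' j) u) j (t j) := by
    funext t
    rw [bigH, bigH, ← Finset.prod_mul_distrib]
  rw [hrw, fubini_prod (fun (j : Fin s) (u : ℝ) => haar1 (r j) (a j) u * haar1 (r' j) (a' j) u)]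
  have : ∃ j : Fin s, ¬(r j = r' j ∧ a j = a' j) := by
    by_contra hc
    push_neg at hc
    exact h ⟨funext fun j => (hc j).1, funext fun j => (hc j).2⟩
  obtain ⟨j, hj⟩ := this
  exact Finset.prod_eq_zero (Finset.mem_univ j) (integral_haar1_mul_haar1_of_ne hj)

lemma integral_bigH_sq (r a : Fin s → ℕ) :
    ∫ t : Fin s → ℝ, bigH r a t * bigH r a t = 1 / 2 ^ (∑ j, r j) := by
  have hrw : (fun t : Fin s → ℝ => bigH r a t * bigH r a t) =
      fun t => ∏ j, (fun (j : Fin s) (u : ℝ) => haar1 (r j) (a j) u * haar1 (r j) (a j) u) j (t j) := by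
    funext t
    rw [bigH, ← Finset.prod_mul_distrib]
  rw [hrw, fubini_prod (fun (j : Fin s) (u : ℝ) => haar1 (r j) (a j) u * haar1 (r j) (a j) u)]
  have : ∀ j : Fin s, (∫ u : ℝ, haar1 (r j) (a j) u * haar1 (r j) (a j) u) = 1 / 2 ^ (r j) :=
    fun j => integral_haar1_sq _ _
  rw [Finset.prod_congr rfl (fun j _ => this j)]
  rw [Finset.prod_div_distrib, Finset.prod_const_one, Finset.prod_pow_eq_pow_sum]

lemma integral_linear_mul_bigH (r a : Fin s → ℕ) :
    ∫ t : Fin s → ℝ, (∏ j, t j) * bigH r a t = (-1)^s / 4 ^ (∑ j, r j + s) := by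
  have hrw : (fun t : Fin s → ℝ => (∏ j, t j) * bigH r a t) =
      fun t => ∏ j, (fun (j : Fin s) (u : ℝ) => u * haar1 (r j) (a j) u) j (t j) := by
    funext t
    rw [bigH, ← Finset.prod_mul_distrib]
  rw [hrw, fubini_prod (fun (j : Fin s) (u : ℝ) => u * haar1 (r j) (a j) u)]
  have : ∀ j : Fin s, (∫ u : ℝ, u * haar1 (r j) (a j) u) = -(1 / 4 ^ (r j + 1)) :=
    fun j => integral_id_mul_haar1 _ _
  rw [Finset.prod_congr rfl (fun j _ => this j)]
  have : ∏ j : Fin s, -(1 / (4:ℝ) ^ (r j + 1)) = (-1)^s * ∏ j : Fin s, (1 / (4:ℝ) ^ (r j + 1)) := by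
    rw [show (fun j : Fin s => -(1 / (4:ℝ) ^ (r j + 1))) = fun j : Fin s => (-1) * (1 / (4:ℝ) ^ (r j + 1)) from funext fun j => by ring]
    rw [Finset.prod_mul_distrib, Finset.prod_const, Finset.card_univ, Fintype.card_fin]
  rw [this, Finset.prod_div_distrib, Finset.prod_const_one, Finset.prod_pow_eq_pow_sum]
  rw [Finset.sum_add_distrib, Finset.sum_const, Finset.card_univ, Fintype.card_fin, smul_eq_mul,
    mul_one]
  ring

lemma integral_point_mul_bigH {r a : Fin s → ℕ} (c : Fin s → ℝ) {j₀ : Fin s}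
    (hj : c j₀ ∉ dyI (r j₀) (a j₀)) :
    ∫ t : Fin s → ℝ, (∏ j, if c j < t j then (1:ℝ) else 0) * bigH r a t = 0 := by
  have hrw : (fun t : Fin s → ℝ => (∏ j, if c j < t j then (1:ℝ) else 0) * bigH r a t) =
      fun t => ∏ j, (fun (j : Fin s) (u : ℝ) =>
        (if c j < u then (1:ℝ) else 0) * haar1 (r j) (a j) u) j (t j) := by
    funext t
    rw [bigH, ← Finset.prod_mul_distrib]
  rw [hrw, fubini_prod (fun (j : Fin s) (u : ℝ) => (if c j < u then (1:ℝ) else 0) * haar1 (r j) (a j) u)]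
  exact Finset.prod_eq_zero (Finset.mem_univ j₀) (integral_ind_mul_haar1 hj)

end RothMulti

noncomputable section RothCount

variable {s : ℕ}

def emptyBoxes (N : ℕ) (x : Fin N → Fin s → ℝ) (r : Fin s → ℕ) : Finset (Fin s → ℕ) :=
  (boxes r).filter fun a => ∀ m, ∃ j, x m j ∉ dyI (r j) (a j)

def Rset (s n : ℕ) : Finset (Fin s → ℕ) :=
  (Fintype.piFinset fun _ : Fin s => Finset.range (n + 1)).filter fun r => ∑ j, r j = n

lemma card_boxes (r : Fin s → ℕ) : (boxes r).card = 2 ^ (∑ j, r j) := by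
  rw [boxes, Fintype.card_piFinset]
  simp only [Finset.card_range]
  rw [Finset.prod_pow_eq_pow_sum]

lemma emptyBoxes_subset (N : ℕ) (x : Fin N → Fin s → ℝ) (r : Fin s → ℕ) :
    emptyBoxes N x r ⊆ boxes r := Finset.filter_subset _ _

lemma dyI_index_unique {k a a' : ℕ} {u : ℝ} (h : u ∈ dyI k a) (h' : u ∈ dyI k a') : a = a' := by
  by_contra hne
  have : u ∈ dyI k a ∩ dyI k a' := ⟨h, h'⟩
  rw [dyI_disjoint hne] at this
  exact absurd this (Set.notMem_empty u)

lemma card_emptyBoxes_ge (N : ℕ) (hN : 0 < N) (x : Fin N → Fin s → ℝ) (r : Fin s → ℕ) :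
    2 ^ (∑ j, r j) ≤ (emptyBoxes N x r).card + N := by
  have hsplit : (emptyBoxes N x r).card
      + ((boxes r).filter fun a => ¬ ∀ m, ∃ j, x m j ∉ dyI (r j) (a j)).card
      = (boxes r).card := by
    unfold emptyBoxes
    exact Finset.card_filter_add_card_filter_not
      (s := boxes r) (p := fun a => ∀ m, ∃ j, x m j ∉ dyI (r j) (a j))
  have hle : ((boxes r).filter fun a => ¬ ∀ m, ∃ j, x m j ∉ dyI (r j) (a j)).card ≤ N := by
    have : ∀ a ∈ (boxes r).filter fun a => ¬ ∀ m, ∃ j, x m j ∉ dyI (r j) (a j),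
        ∃ m : Fin N, ∀ j, x m j ∈ dyI (r j) (a j) := by
      intro a ha
      rw [Finset.mem_filter] at ha
      have := ha.2
      push_neg at this
      exact this
    calc ((boxes r).filter fun a => ¬ ∀ m, ∃ j, x m j ∉ dyI (r j) (a j)).card
        ≤ (Finset.univ : Finset (Fin N)).card := by
          apply Finset.card_le_card_of_injOn
            (fun a => if h : ∃ m : Fin N, ∀ j, x m j ∈ dyI (r j) (a j)
              then Classical.choose h else ⟨0, hN⟩)
            (fun a _ => Finset.mem_univ _)
          intro a₁ h₁ a₂ h₂ heq
          have e₁ := this a₁ h₁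
          have e₂ := this a₂ h₂
          dsimp only at heq
          rw [dif_pos e₁, dif_pos e₂] at heq
          have s₁ := Classical.choose_spec e₁
          have s₂ := Classical.choose_spec e₂
          rw [heq] at s₁
          funext j
          exact dyI_index_unique (s₁ j) (s₂ j)
      _ = N := by rw [Finset.card_univ, Fintype.card_fin]
  rw [card_boxes] at hsplit
  rw [← hsplit]
  exact Nat.add_le_add_left hle _

lemma card_Rset_ge {n : ℕ} (hs : 2 ≤ s) (q : ℕ) (hq : q * (s - 1) ≤ n) :
    (q + 1) ^ (s - 1) ≤ (Rset s n).card := by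
  have hs1 : 1 ≤ s - 1 := by omega
  have hqn : q ≤ n := le_trans (Nat.le_mul_of_pos_right q (by omega)) hq
  set j₀ : Fin s := ⟨0, by omega⟩ with hj₀
  set S : Finset (Fin s → ℕ) :=
    Fintype.piFinset (fun j => if j = j₀ then Finset.range 1 else Finset.range (q + 1)) with hS
  have hcardS : S.card = (q + 1) ^ (s - 1) := by
    rw [hS, Fintype.card_piFinset]
    rw [← Finset.mul_prod_erase Finset.univ _ (Finset.mem_univ j₀)]
    rw [if_pos rfl, Finset.card_range, one_mul]
    rw [Finset.prod_congr rfl (fun j hj => by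
      rw [if_neg (Finset.ne_of_mem_erase hj), Finset.card_range])]
    rw [Finset.prod_const, Finset.card_erase_of_mem (Finset.mem_univ j₀), Finset.card_univ,
      Fintype.card_fin]
  rw [← hcardS]
  apply Finset.card_le_card_of_injOn (fun b => Function.update b j₀ (n - ∑ j, b j))
  · intro b hb
    simp only [Finset.mem_coe] at hb ⊢
    rw [hS, Fintype.mem_piFinset] at hb
    have hb₀ : b j₀ = 0 := by
      have := hb j₀
      rw [if_pos rfl, Finset.mem_range] at this
      omega
    have hbq : ∀ j, j ≠ j₀ → b j ≤ q := by
      intro j hj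
      have := hb j
      rw [if_neg hj, Finset.mem_range] at this
      omega
    have hT : ∑ j, b j ≤ n := by
      calc ∑ j, b j = b j₀ + ∑ j ∈ Finset.univ.erase j₀, b j :=
            (Finset.add_sum_erase _ _ (Finset.mem_univ j₀)).symm
      _ = ∑ j ∈ Finset.univ.erase j₀, b j := by rw [hb₀, zero_add]
      _ ≤ (Finset.univ.erase j₀).card • q :=
            Finset.sum_le_card_nsmul _ _ q (fun j hj => hbq j (Finset.ne_of_mem_erase hj))
      _ = (s - 1) * q := by
            rw [Finset.card_erase_of_mem (Finset.mem_univ j₀), Finset.card_univ, Fintype.card_fin,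
              smul_eq_mul]
      _ ≤ n := by rw [mul_comm]; exact hq
    rw [Rset, Finset.mem_filter]
    constructor
    · rw [Fintype.mem_piFinset]
      intro j
      rw [Finset.mem_range]
      by_cases hj : j = j₀
      · subst hj; rw [Function.update_self]; omega
      · rw [Function.update_of_ne hj]
        have := hbq j hj
        omega
    · rw [Finset.sum_update_of_mem (Finset.mem_univ j₀)]
      have h5 : ∑ j ∈ Finset.univ.erase j₀, b j = ∑ j, b j := by
        rw [← Finset.add_sum_erase _ _ (Finset.mem_univ j₀), hb₀, zero_add]
      rw [← Finset.erase_eq, h5]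
      omega
  · intro b₁ h₁ b₂ h₂ heq
    have h₁' : b₁ ∈ S := h₁
    have h₂' : b₂ ∈ S := h₂
    rw [hS, Fintype.mem_piFinset] at h₁' h₂'
    have hb₁ : b₁ j₀ = 0 := by have := h₁' j₀; rw [if_pos rfl, Finset.mem_range] at this; omega
    have hb₂ : b₂ j₀ = 0 := by have := h₂' j₀; rw [if_pos rfl, Finset.mem_range] at this; omega
    funext j
    by_cases hj : j = j₀
    · subst hj; rw [hb₁, hb₂]
    · have h6 := congrFun heq j
      dsimp only at h6
      rwa [Function.update_of_ne hj, Function.update_of_ne hj] at h6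

/-- Cauchy-Schwarz for integrals -/
lemma integral_cauchy_schwarz {α : Type*} [MeasurableSpace α] (μ : MeasureTheory.Measure α)
    (f g : α → ℝ)
    (hff : MeasureTheory.Integrable (fun t => f t * f t) μ)
    (hgg : MeasureTheory.Integrable (fun t => g t * g t) μ)
    (hfg : MeasureTheory.Integrable (fun t => f t * g t) μ) :
    (∫ t, f t * g t ∂μ) ^ 2 ≤ (∫ t, f t * f t ∂μ) * (∫ t, g t * g t ∂μ) := by
  set A := ∫ t, g t * g t ∂μ with hA
  set B := ∫ t, f t * g t ∂μ with hB
  set C := ∫ t, f t * f t ∂μ with hC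
  have key : ∀ lam : ℝ, 0 ≤ A * (lam * lam) + (2 * B) * lam + C := by
    intro lam
    have h1 : (fun t => (lam * g t + f t) * (lam * g t + f t)) =
        fun t => (lam * lam) * (g t * g t) + (2 * lam) * (f t * g t) + f t * f t := by
      funext t; ring
    have hgg' : MeasureTheory.Integrable (fun t => (lam * lam) * (g t * g t)) μ :=
      hgg.const_mul _
    have hfg' : MeasureTheory.Integrable (fun t => (2 * lam) * (f t * g t)) μ :=
      hfg.const_mul _
    have hsum : MeasureTheory.Integrable
        (fun t => (lam * lam) * (g t * g t) + (2 * lam) * (f t * g t)) μ := by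
      exact hgg'.add hfg'
    have h3 : 0 ≤ ∫ t, (lam * lam) * (g t * g t) + (2 * lam) * (f t * g t) + f t * f t ∂μ := by
      rw [← h1]
      exact MeasureTheory.integral_nonneg (fun t => mul_self_nonneg _)
    rw [MeasureTheory.integral_add hsum hff,
      MeasureTheory.integral_add hgg' hfg',
      MeasureTheory.integral_const_mul, MeasureTheory.integral_const_mul] at h3
    rw [← hA, ← hB, ← hC] at h3
    nlinarith [h3]
  have hd := discrim_le_zero key
  rw [discrim] at hd
  nlinarith [hd]

end RothCount

noncomputable section RothTest

variable {s : ℕ}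

def Dfun (s N : ℕ) (x : Fin N → Fin s → ℝ) : (Fin s → ℝ) → ℝ :=
  fun t => (∑ m, ∏ j, if x m j < t j then (1:ℝ) else 0) / N - ∏ j, t j

def testF (s N n : ℕ) (x : Fin N → Fin s → ℝ) : (Fin s → ℝ) → ℝ :=
  fun t => (-1:ℝ) ^ (s+1) * ∑ r ∈ Rset s n, ∑ a ∈ emptyBoxes N x r, bigH r a t

lemma measurable_indprod {N : ℕ} (x : Fin N → Fin s → ℝ) (m : Fin N) :
    Measurable (fun t : Fin s → ℝ => ∏ j, if x m j < t j then (1:ℝ) else 0) := by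
  apply Finset.measurable_prod
  intro j _
  exact Measurable.ite (measurableSet_lt measurable_const (measurable_pi_apply j))
    measurable_const measurable_const

lemma abs_indprod_le {N : ℕ} (x : Fin N → Fin s → ℝ) (m : Fin N) (t : Fin s → ℝ) :
    |∏ j, if x m j < t j then (1:ℝ) else 0| ≤ 1 := by
  rw [Finset.abs_prod]
  apply Finset.prod_le_one (fun j _ => abs_nonneg _)
  intro j _
  split <;> simp

lemma measurable_Dfun (N : ℕ) (x : Fin N → Fin s → ℝ) : Measurable (Dfun s N x) := by
  apply Measurable.sub
  · exact (Finset.measurable_sum _ (fun m _ => measurable_indprod x m)).div_const _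
  · exact Finset.measurable_prod _ (fun j _ => measurable_pi_apply j)

lemma abs_Dfun_le {N : ℕ} (hN : 1 ≤ N) (x : Fin N → Fin s → ℝ) {t : Fin s → ℝ}
    (ht : t ∈ cube s) : |Dfun s N x t| ≤ 2 := by
  rw [Dfun]
  have h1 : |(∑ m, ∏ j, if x m j < t j then (1:ℝ) else 0) / N| ≤ 1 := by
    rw [abs_div]
    rw [abs_of_nonneg (by positivity : (0:ℝ) ≤ (N:ℝ))]
    rw [div_le_one (by exact_mod_cast hN : (0:ℝ) < (N:ℝ))]
    calc |∑ m, ∏ j, if x m j < t j then (1:ℝ) else 0|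
        ≤ ∑ m : Fin N, |∏ j, if x m j < t j then (1:ℝ) else 0| := Finset.abs_sum_le_sum_abs _ _
    _ ≤ ∑ _m : Fin N, (1:ℝ) := Finset.sum_le_sum (fun m _ => abs_indprod_le x m t)
    _ = N := by simp
  have h2 : |∏ j, t j| ≤ 1 := by
    rw [Finset.abs_prod]
    apply Finset.prod_le_one (fun j _ => abs_nonneg _)
    intro j _
    rw [cube, Set.mem_univ_pi] at ht
    rw [abs_le]
    exact ⟨by linarith [(ht j).1], (ht j).2⟩
  calc |_ - _| ≤ |(∑ m, ∏ j, if x m j < t j then (1:ℝ) else 0) / N| + |∏ j, t j| := abs_sub _ _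
  _ ≤ 2 := by linarith

lemma integrable_linear_mul_bigH_cube (r a : Fin s → ℕ) :
    MeasureTheory.IntegrableOn (fun t : Fin s → ℝ => (∏ j, t j) * bigH r a t) (cube s) := by
  apply integrable_on_cube
    ((Finset.measurable_prod _ (fun j _ => measurable_pi_apply j)).mul (measurable_bigH r a)) 1
  intro t ht
  rw [Pi.mul_apply, abs_mul]
  have h2 : |∏ j, t j| ≤ 1 := by
    rw [Finset.abs_prod]
    apply Finset.prod_le_one (fun j _ => abs_nonneg _)
    intro j _
    rw [cube, Set.mem_univ_pi] at ht
    rw [abs_le]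
    exact ⟨by linarith [(ht j).1], (ht j).2⟩
  calc |∏ j, t j| * |bigH r a t| ≤ 1 * 1 :=
    mul_le_mul h2 (abs_bigH_le r a t) (abs_nonneg _) zero_le_one
  _ = 1 := mul_one 1

lemma integral_D_mul_bigH {N : ℕ} (hN : 0 < N) (x : Fin N → Fin s → ℝ) {r a : Fin s → ℕ}
    (ha : a ∈ emptyBoxes N x r) :
    ∫ t in cube s, Dfun s N x t * bigH r a t = -((-1)^s / 4 ^ (∑ j, r j + s)) := by
  have haB : a ∈ boxes r := emptyBoxes_subset _ _ _ ha
  have hsupp : ∀ t ∉ cube s, bigH r a t = 0 := fun t ht => bigH_eq_zero_of_not_mem_cube haB ht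
  have hkey : (fun t => Dfun s N x t * bigH r a t) = fun t =>
      (∑ m, ((∏ j, if x m j < t j then (1:ℝ) else 0) * bigH r a t) / N)
        - (∏ j, t j) * bigH r a t := by
    funext t
    rw [Dfun, sub_mul, div_mul_eq_mul_div, Finset.sum_mul, Finset.sum_div]
  rw [hkey]
  have hint_m : ∀ m : Fin N, MeasureTheory.IntegrableOn
      (fun t : Fin s → ℝ => ((∏ j, if x m j < t j then (1:ℝ) else 0) * bigH r a t) / N)
      (cube s) := by
    intro m
    apply MeasureTheory.Integrable.div_const
    apply integrable_on_cube ((measurable_indprod x m).mul (measurable_bigH r a)) 1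
    intro t _
    rw [Pi.mul_apply, abs_mul]
    calc |∏ j, if x m j < t j then (1:ℝ) else 0| * |bigH r a t| ≤ 1 * 1 :=
      mul_le_mul (abs_indprod_le x m t) (abs_bigH_le r a t) (abs_nonneg _) zero_le_one
    _ = 1 := mul_one 1
  rw [MeasureTheory.integral_sub
    (MeasureTheory.integrable_finset_sum _ (fun m _ => hint_m m))
    (integrable_linear_mul_bigH_cube r a)]
  rw [MeasureTheory.integral_finset_sum _ (fun m _ => hint_m m)]
  have hm0 : ∀ m ∈ (Finset.univ : Finset (Fin N)),
      (∫ t in cube s, ((∏ j, if x m j < t j then (1:ℝ) else 0) * bigH r a t) / N) = 0 := by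
    intro m _
    rw [MeasureTheory.integral_div]
    rw [setIntegral_cube_eq (fun t ht => by rw [hsupp t ht, mul_zero])]
    obtain ⟨j₀, hj₀⟩ := (Finset.mem_filter.mp ha).2 m
    rw [integral_point_mul_bigH _ hj₀, zero_div]
  rw [Finset.sum_eq_zero hm0]
  rw [setIntegral_cube_eq (fun t ht => by rw [hsupp t ht, mul_zero])]
  rw [integral_linear_mul_bigH]
  ring

lemma integrable_bigH_mul_bigH_cube (r a r' a' : Fin s → ℕ) :
    MeasureTheory.IntegrableOn (fun t : Fin s → ℝ => bigH r a t * bigH r' a' t) (cube s) := by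
  apply integrable_on_cube ((measurable_bigH r a).mul (measurable_bigH r' a')) 1
  intro t _
  rw [Pi.mul_apply, abs_mul]
  calc |bigH r a t| * |bigH r' a' t| ≤ 1 * 1 :=
    mul_le_mul (abs_bigH_le r a t) (abs_bigH_le r' a' t) (abs_nonneg _) zero_le_one
  _ = 1 := mul_one 1

lemma integral_bigH_mul_bigH_cube {r a : Fin s → ℕ} (r' a' : Fin s → ℕ) (ha : a ∈ boxes r) :
    ∫ t in cube s, bigH r a t * bigH r' a' t = ∫ t : Fin s → ℝ, bigH r a t * bigH r' a' t :=
  setIntegral_cube_eq (fun t ht => by rw [bigH_eq_zero_of_not_mem_cube ha ht, zero_mul])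

end RothTest

noncomputable section RothAgg

variable {s : ℕ}

lemma neg_one_sq_pow (k : ℕ) : ((-1:ℝ))^k * ((-1:ℝ))^k = 1 := by
  rw [← pow_add]
  exact Even.neg_one_pow ⟨k, rfl⟩

lemma integrable_D_mul_bigH_cube {N : ℕ} (hN : 0 < N) (x : Fin N → Fin s → ℝ)
    (r a : Fin s → ℕ) :
    MeasureTheory.IntegrableOn (fun t : Fin s → ℝ => Dfun s N x t * bigH r a t) (cube s) := by
  apply integrable_on_cube ((measurable_Dfun N x).mul (measurable_bigH r a)) 2
  intro t ht
  rw [Pi.mul_apply, abs_mul]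
  calc |Dfun s N x t| * |bigH r a t| ≤ 2 * 1 :=
    mul_le_mul (abs_Dfun_le hN x ht) (abs_bigH_le r a t) (abs_nonneg _) (by norm_num)
  _ = 2 := mul_one 2

lemma integral_D_mul_testF {N n : ℕ} (hN : 0 < N) (x : Fin N → Fin s → ℝ) :
    ∫ t in cube s, Dfun s N x t * testF s N n x t
      = (∑ r ∈ Rset s n, ((emptyBoxes N x r).card : ℝ)) / 4 ^ (n + s) := by
  have hkey : (fun t => Dfun s N x t * testF s N n x t) = fun t =>
      (-1:ℝ)^(s+1) * ∑ r ∈ Rset s n, ∑ a ∈ emptyBoxes N x r, Dfun s N x t * bigH r a t := by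
    funext t
    rw [testF, mul_left_comm]
    congr 1
    rw [Finset.mul_sum]
    refine Finset.sum_congr rfl (fun r _ => ?_)
    rw [Finset.mul_sum]
  rw [hkey]
  rw [MeasureTheory.integral_const_mul]
  rw [MeasureTheory.integral_finset_sum _ (fun r _ =>
    MeasureTheory.integrable_finset_sum _ (fun a _ => integrable_D_mul_bigH_cube hN x r a))]
  have hr' : ∀ r ∈ Rset s n,
      (∫ t in cube s, ∑ a ∈ emptyBoxes N x r, Dfun s N x t * bigH r a t)
        = ((emptyBoxes N x r).card : ℝ) * -((-1)^s / 4 ^ (n + s)) := by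
    intro r hr
    rw [MeasureTheory.integral_finset_sum _ (fun a _ => integrable_D_mul_bigH_cube hN x r a)]
    rw [Finset.sum_congr rfl (fun a ha => integral_D_mul_bigH hN x ha)]
    rw [Finset.sum_const, nsmul_eq_mul, (Finset.mem_filter.mp hr).2]
  rw [Finset.sum_congr rfl hr']
  rw [← Finset.sum_mul]
  have h2 : ((-1:ℝ))^(s+1) * -((-1:ℝ)^s) = 1 := by
    calc ((-1:ℝ))^(s+1) * -((-1:ℝ)^s) = ((-1:ℝ))^s * ((-1:ℝ))^s := by rw [pow_succ]; ring
    _ = 1 := neg_one_sq_pow s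
  rw [show ((-1:ℝ))^(s+1) * ((∑ r ∈ Rset s n, ((emptyBoxes N x r).card : ℝ))
      * -((-1)^s / 4 ^ (n + s)))
    = (((-1:ℝ))^(s+1) * -((-1:ℝ)^s)) * ((∑ r ∈ Rset s n, ((emptyBoxes N x r).card : ℝ))
      / 4 ^ (n + s)) from by ring]
  rw [h2, one_mul]

lemma integral_testF_sq {N n : ℕ} (x : Fin N → Fin s → ℝ) :
    ∫ t in cube s, testF s N n x t * testF s N n x t
      = (∑ r ∈ Rset s n, ((emptyBoxes N x r).card : ℝ)) / 2 ^ n := by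
  set P := (Rset s n).sigma (fun r => emptyBoxes N x r) with hP
  have hsum : ∀ t, testF s N n x t = (-1:ℝ)^(s+1) * ∑ p ∈ P, bigH p.1 p.2 t := by
    intro t
    rw [testF, hP, Finset.sum_sigma]
  have hkey : (fun t => testF s N n x t * testF s N n x t) =
      fun t => ∑ p ∈ P, ∑ q ∈ P, bigH p.1 p.2 t * bigH q.1 q.2 t := by
    funext t
    rw [hsum, mul_mul_mul_comm, neg_one_sq_pow, one_mul, Finset.sum_mul_sum]
  rw [hkey]
  rw [MeasureTheory.integral_finset_sum _ (fun p _ =>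
    MeasureTheory.integrable_finset_sum _ (fun q _ => integrable_bigH_mul_bigH_cube _ _ _ _))]
  have hinner : ∀ p ∈ P, (∫ t in cube s, ∑ q ∈ P, bigH p.1 p.2 t * bigH q.1 q.2 t)
      = 1 / 2 ^ n := by
    intro p hp
    rw [MeasureTheory.integral_finset_sum _ (fun q _ => integrable_bigH_mul_bigH_cube _ _ _ _)]
    have hpB : p.2 ∈ boxes p.1 := emptyBoxes_subset _ _ _ (Finset.mem_sigma.mp hp).2
    rw [Finset.sum_eq_single_of_mem p hp (fun q hq hne => ?_)]
    · rw [integral_bigH_mul_bigH_cube _ _ hpB, integral_bigH_sq,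
        (Finset.mem_filter.mp (Finset.mem_sigma.mp hp).1).2]
    · rw [integral_bigH_mul_bigH_cube _ _ hpB]
      apply integral_bigH_mul_bigH
      rintro ⟨h1, h2⟩
      exact hne (Sigma.ext h1.symm (heq_of_eq h2.symm))
  rw [Finset.sum_congr rfl hinner]
  rw [Finset.sum_const, nsmul_eq_mul, hP, Finset.card_sigma]
  push_cast
  rw [mul_one_div]

end RothAgg

noncomputable section RothMain

variable {s : ℕ}

lemma measurable_testF (N n : ℕ) (x : Fin N → Fin s → ℝ) : Measurable (testF s N n x) := by
  unfold testF
  apply Measurable.const_mul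
  apply Finset.measurable_sum
  intro r _
  exact Finset.measurable_sum _ (fun a _ => measurable_bigH r a)

lemma abs_testF_le (N n : ℕ) (x : Fin N → Fin s → ℝ) (t : Fin s → ℝ) :
    |testF s N n x t| ≤ ∑ r ∈ Rset s n, ((emptyBoxes N x r).card : ℝ) := by
  rw [testF, abs_mul]
  have h1 : |(-1:ℝ)^(s+1)| = 1 := by
    rw [abs_pow, abs_neg, abs_one, one_pow]
  rw [h1, one_mul]
  calc |∑ r ∈ Rset s n, ∑ a ∈ emptyBoxes N x r, bigH r a t|
      ≤ ∑ r ∈ Rset s n, |∑ a ∈ emptyBoxes N x r, bigH r a t| := Finset.abs_sum_le_sum_abs _ _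
  _ ≤ ∑ r ∈ Rset s n, ((emptyBoxes N x r).card : ℝ) := by
      apply Finset.sum_le_sum
      intro r _
      calc |∑ a ∈ emptyBoxes N x r, bigH r a t| ≤ ∑ a ∈ emptyBoxes N x r, |bigH r a t| :=
        Finset.abs_sum_le_sum_abs _ _
      _ ≤ ∑ _a ∈ emptyBoxes N x r, (1:ℝ) := Finset.sum_le_sum (fun a _ => abs_bigH_le r a t)
      _ = ((emptyBoxes N x r).card : ℝ) := by rw [Finset.sum_const, nsmul_eq_mul, mul_one]

end RothMain

/-- Roth's lower bound for the `L₂` discrepancy: in dimension `s ≥ 2` there is `c_s > 0`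
such that every `N`-point set in `[0,1)^s` with `N ≥ 2` has
`L_{2,N} ≥ c_s (log N)^{(s-1)/2} / N`. -/
theorem roth_L2_lower_bound (s : ℕ) (hs : 2 ≤ s) :
    ∃ c : ℝ, 0 < c ∧ ∀ N : ℕ, 2 ≤ N → ∀ x : Fin N → Fin s → ℝ,
      (∀ n j, x n j ∈ Set.Ico (0 : ℝ) 1) →
      c * (Real.log N) ^ ((s - 1 : ℝ) / 2) / N ≤
        Real.sqrt (∫ t in (Set.univ.pi fun _ : Fin s => Set.Icc (0 : ℝ) 1),
          (((Finset.univ.filter fun n => ∀ j, x n j < t j).card : ℝ) / N - ∏ j, t j) ^ 2) := by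
  have hs1R : (0:ℝ) < (s:ℝ) - 1 := by
    have : (2:ℝ) ≤ (s:ℝ) := by exact_mod_cast hs
    linarith
  set Kc : ℝ := ((s:ℝ) - 1) ^ (s - 1) * 32 * 16 ^ s with hKc
  have hKc_pos : 0 < Kc :=
    mul_pos (mul_pos (pow_pos hs1R _) (by norm_num)) (pow_pos (by norm_num) _)
  refine ⟨Real.sqrt (1 / Kc), Real.sqrt_pos.mpr (by positivity), ?_⟩
  intro N hN x _hx
  set n : ℕ := Nat.log 2 N + 2 with hn
  have hN0 : 0 < N := by omega
  have hlog2 : N < 2 ^ (Nat.log 2 N + 1) := Nat.lt_pow_succ_log_self (by norm_num) N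
  have hpowlog : 2 ^ Nat.log 2 N ≤ N := Nat.pow_log_le_self 2 (by omega)
  have h2n_ge : 2 * N ≤ 2 ^ n := by
    have e1 : 2 ^ n = 2 * 2 ^ (Nat.log 2 N + 1) := by rw [hn, pow_succ, mul_comm]
    omega
  have h2n_le : 2 ^ n ≤ 4 * N := by
    have e1 : 2 ^ n = 4 * 2 ^ Nat.log 2 N := by rw [hn, pow_add]; ring
    omega
  set T : ℝ := ∑ r ∈ Rset s n, ((emptyBoxes N x r).card : ℝ) with hT
  set R' : ℝ := ((Rset s n).card : ℝ) with hR'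
  set A : ℝ := (2:ℝ) ^ n with hA
  have hA_pos : 0 < A := by positivity
  have hA_ge : 2 * (N:ℝ) ≤ A := by
    rw [hA]
    calc (2:ℝ) * N = ((2 * N : ℕ) : ℝ) := by push_cast; ring
    _ ≤ ((2 ^ n : ℕ) : ℝ) := by exact_mod_cast h2n_ge
    _ = (2:ℝ)^n := by push_cast; ring
  have hA_le : A ≤ 4 * (N:ℝ) := by
    rw [hA]
    calc (2:ℝ)^n = ((2 ^ n : ℕ) : ℝ) := by push_cast; ring
    _ ≤ ((4 * N : ℕ) : ℝ) := by exact_mod_cast h2n_le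
    _ = 4 * (N:ℝ) := by push_cast; ring
  have hNR : (2:ℝ) ≤ (N:ℝ) := by exact_mod_cast hN
  have hcardE : ∀ r ∈ Rset s n, A / 2 ≤ ((emptyBoxes N x r).card : ℝ) := by
    intro r hr
    have h1 : 2 ^ (∑ j, r j) ≤ (emptyBoxes N x r).card + N := card_emptyBoxes_ge N hN0 x r
    rw [(Finset.mem_filter.mp hr).2] at h1
    have h2 : A ≤ ((emptyBoxes N x r).card : ℝ) + N := by
      rw [hA]
      calc (2:ℝ)^n = ((2^n : ℕ) : ℝ) := by push_cast; ring
      _ ≤ (((emptyBoxes N x r).card + N : ℕ) : ℝ) := by exact_mod_cast h1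
      _ = ((emptyBoxes N x r).card : ℝ) + N := by push_cast; ring
    have h3 : (N:ℝ) ≤ A / 2 := by linarith
    linarith
  have hq := Nat.div_mul_le_self n (s - 1)
  have hRcard : (n / (s-1) + 1) ^ (s - 1) ≤ (Rset s n).card := card_Rset_ge hs _ hq
  have hR1 : (1:ℝ) ≤ R' := by
    rw [hR']
    have h1 : 1 ≤ (Rset s n).card := le_trans (Nat.one_le_pow _ _ (Nat.succ_pos _)) hRcard
    exact_mod_cast h1
  have hT_ge : R' * (A / 2) ≤ T := by
    rw [hT, hR']
    calc ((Rset s n).card : ℝ) * (A / 2) = ∑ _r ∈ Rset s n, (A / 2) := by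
          rw [Finset.sum_const, nsmul_eq_mul]
    _ ≤ ∑ r ∈ Rset s n, ((emptyBoxes N x r).card : ℝ) := Finset.sum_le_sum hcardE
  have hT_pos : 0 < T := lt_of_lt_of_le (by nlinarith) hT_ge
  set I : ℝ := ∫ t in cube s, Dfun s N x t * Dfun s N x t with hI
  have hDD_int : MeasureTheory.IntegrableOn
      (fun t : Fin s → ℝ => Dfun s N x t * Dfun s N x t) (cube s) := by
    apply integrable_on_cube ((measurable_Dfun N x).mul (measurable_Dfun N x)) 4
    intro t ht
    rw [Pi.mul_apply, abs_mul]
    calc |Dfun s N x t| * |Dfun s N x t| ≤ 2 * 2 :=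
      mul_le_mul (abs_Dfun_le hN0 x ht) (abs_Dfun_le hN0 x ht) (abs_nonneg _) (by norm_num)
    _ = 4 := by norm_num
  have hT_nonneg : 0 ≤ T := le_of_lt hT_pos
  have hFF_int : MeasureTheory.IntegrableOn
      (fun t : Fin s → ℝ => testF s N n x t * testF s N n x t) (cube s) := by
    apply integrable_on_cube ((measurable_testF N n x).mul (measurable_testF N n x)) (T * T)
    intro t _
    rw [Pi.mul_apply, abs_mul]
    exact mul_le_mul (abs_testF_le N n x t) (abs_testF_le N n x t) (abs_nonneg _) hT_nonneg
  have hDF_int : MeasureTheory.IntegrableOn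
      (fun t : Fin s → ℝ => Dfun s N x t * testF s N n x t) (cube s) := by
    apply integrable_on_cube ((measurable_Dfun N x).mul (measurable_testF N n x)) (2 * T)
    intro t ht
    rw [Pi.mul_apply, abs_mul]
    exact mul_le_mul (abs_Dfun_le hN0 x ht) (abs_testF_le N n x t) (abs_nonneg _) (by norm_num)
  have hCS := integral_cauchy_schwarz (MeasureTheory.volume.restrict (cube s))
    (Dfun s N x) (testF s N n x) hDD_int hFF_int hDF_int
  rw [integral_D_mul_testF hN0 x, integral_testF_sq x, ← hI, ← hT] at hCS
  have h44 : ((4:ℝ)^(n+s))^2 = 16^(n+s) := by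
    rw [← pow_mul, mul_comm (n+s) 2, pow_mul]
    norm_num
  have h16pos : (0:ℝ) < 16^(n+s) := by positivity
  have hstep : T^2 * A ≤ I * T * 16^(n+s) := by
    have e1 := mul_le_mul_of_nonneg_right hCS
      (le_of_lt (mul_pos hA_pos h16pos) : (0:ℝ) ≤ A * 16^(n+s))
    have e2 : (T / 4^(n+s))^2 * (A * 16^(n+s)) = T^2 * A := by
      rw [div_pow, h44]
      field_simp
    have e3 : I * (T / 2^n) * (A * 16^(n+s)) = I * T * 16^(n+s) := by
      rw [← hA]
      field_simp
    rw [e2, e3] at e1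
    exact e1
  have hI_ge : T * A / 16^(n+s) ≤ I := by
    rw [div_le_iff₀ h16pos]
    nlinarith [hstep, hT_pos, hA_pos, h16pos]
  have h16split : (16:ℝ)^(n+s) = A^4 * 16^s := by
    rw [pow_add]
    congr 1
    rw [hA, show (16:ℝ) = 2^4 by norm_num, ← pow_mul, mul_comm, pow_mul]
  have hA2N : A^2 ≤ 16 * (N:ℝ)^2 := by nlinarith
  have hI_ge2 : R' / (32 * 16^s * (N:ℝ)^2) ≤ I := by
    have e1 : R' * (A/2) * A / 16^(n+s) ≤ T * A / 16^(n+s) := by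
      apply (div_le_div_iff_of_pos_right h16pos).mpr
      nlinarith [hT_ge, hA_pos]
    have e2 : R' * (A/2) * A / 16^(n+s) = R' / (2 * A^2 * 16^s) := by
      rw [h16split]
      field_simp
    have e3 : R' / (32 * 16^s * (N:ℝ)^2) ≤ R' / (2 * A^2 * 16^s) := by
      apply (div_le_div_iff_of_pos_left (by linarith : (0:ℝ) < R') (by positivity) (by positivity)).mpr
      have h16s : (0:ℝ) < 16^s := by positivity
      nlinarith [hA2N, h16s]
    rw [e2] at e1
    linarith
  -- relate card(Rset) to powers of log N
  have hlogN_nonneg : 0 ≤ Real.log N := Real.log_nonneg (by linarith)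
  have hn_ge_log : Real.log N ≤ (n:ℝ) := by
    have hN2n : (N:ℝ) ≤ (2:ℝ)^n := by rw [← hA]; linarith
    have h1 : Real.log N ≤ Real.log ((2:ℝ)^n) :=
      Real.log_le_log (by linarith) hN2n
    rw [Real.log_pow] at h1
    have h2 : Real.log 2 ≤ 1 := by
      have := Real.log_le_sub_one_of_pos (by norm_num : (0:ℝ) < 2)
      linarith
    calc Real.log N ≤ (n:ℝ) * Real.log 2 := h1
    _ ≤ (n:ℝ) * 1 := by
        apply mul_le_mul_of_nonneg_left h2 (by positivity)
    _ = (n:ℝ) := mul_one _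
  have hq1 : (n:ℝ) / ((s:ℝ)-1) ≤ ((n/(s-1) + 1 : ℕ) : ℝ) := by
    have hk : 0 < s - 1 := by omega
    have h1 : n % (s-1) < s - 1 := Nat.mod_lt _ hk
    have h2 : (s-1) * (n / (s-1)) + n % (s-1) = n := Nat.div_add_mod n (s-1)
    have h3 : n ≤ (n/(s-1) + 1) * (s-1) := by
      calc n = (s-1)*(n/(s-1)) + n%(s-1) := h2.symm
      _ ≤ (s-1)*(n/(s-1)) + (s-1) := by omega
      _ = (n/(s-1)+1)*(s-1) := by ring
    rw [div_le_iff₀ hs1R]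
    have h4 : ((n:ℝ)) ≤ ((n/(s-1) + 1 : ℕ) : ℝ) * (((s-1 : ℕ)) : ℝ) := by
      exact_mod_cast h3
    have h5 : (((s-1 : ℕ)) : ℝ) = (s:ℝ) - 1 := by
      rw [Nat.cast_sub (by omega)]
      norm_num
    rw [h5] at h4
    exact h4
  have hRge : (Real.log N / ((s:ℝ)-1))^(s-1) ≤ R' := by
    calc (Real.log N / ((s:ℝ)-1))^(s-1) ≤ ((n:ℝ)/((s:ℝ)-1))^(s-1) := by
          gcongr
    _ ≤ (((n/(s-1) + 1 : ℕ)) : ℝ)^(s-1) := by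
          gcongr
    _ ≤ R' := by
          rw [hR']
          exact_mod_cast hRcard
  have hfinal : (Real.log N)^(s-1) / (Kc * (N:ℝ)^2) ≤ I := by
    refine le_trans ?_ hI_ge2
    calc (Real.log N)^(s-1) / (Kc * (N:ℝ)^2)
        = (Real.log N / ((s:ℝ)-1))^(s-1) / (32 * 16^s * (N:ℝ)^2) := by
          rw [hKc, div_pow]
          ring
    _ ≤ R' / (32 * 16^s * (N:ℝ)^2) := by
          gcongr
  -- identify the goal integrand with Dfun * Dfun
  have hcount : ∀ t : Fin s → ℝ,
      ((Finset.univ.filter fun m => ∀ j, x m j < t j).card : ℝ)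
        = ∑ m, ∏ j, if x m j < t j then (1:ℝ) else 0 := by
    intro t
    rw [Finset.card_filter]
    push_cast
    refine Finset.sum_congr rfl (fun m _ => ?_)
    rw [Finset.prod_boole]
    simp
  have hDD : (fun t : Fin s → ℝ =>
      (((Finset.univ.filter fun m => ∀ j, x m j < t j).card : ℝ) / N - ∏ j, t j)^2)
      = fun t => Dfun s N x t * Dfun s N x t := by
    funext t
    rw [hcount t]
    simp only [Dfun]
    ring
  rw [show (Set.univ.pi fun _ : Fin s => Set.Icc (0:ℝ) 1) = cube s from rfl]
  rw [hDD, ← hI]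
  have hLpow : Real.sqrt ((Real.log N)^(s-1)) = (Real.log N) ^ (((s:ℝ)-1)/2) := by
    rw [Real.sqrt_eq_rpow, ← Real.rpow_natCast (Real.log N) (s-1),
      ← Real.rpow_mul hlogN_nonneg]
    congr 1
    rw [Nat.cast_sub (by omega)]
    push_cast
    ring
  have hNpos : (0:ℝ) < (N:ℝ) := by linarith
  have hsplit2 : (Real.log N)^(s-1) / (Kc * (N:ℝ)^2)
      = (1/Kc) * ((Real.log N)^(s-1)) * (1/(N:ℝ))^2 := by
    field_simp
  have hE : Real.sqrt ((Real.log N)^(s-1) / (Kc * (N:ℝ)^2))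
      = Real.sqrt (1/Kc) * (Real.log N) ^ (((s:ℝ)-1)/2) / N := by
    rw [hsplit2, Real.sqrt_mul (by positivity) ((1/(N:ℝ))^2),
      Real.sqrt_mul (by positivity) _, Real.sqrt_sq (by positivity), hLpow]
    ring
  calc Real.sqrt (1/Kc) * (Real.log N) ^ (((s:ℝ)-1)/2) / N
      = Real.sqrt ((Real.log N)^(s-1) / (Kc * (N:ℝ)^2)) := hE.symm
  _ ≤ Real.sqrt I := Real.sqrt_le_sqrt hfinal
end

section
/- (Proĭnov transference principle) Let s ≥ 1 and p ∈ [1, ∞]. Suppose there is a constant c > 0 such that every finite N-point set in [0,1)^{s+1} has L_p discrepancy at least c (log N)^{α} / N for all N ≥ 2. Then there is a constant C > 0 such that every infinite sequence S in [0,1)^s satisfies L_{p,N}(S) ≥ C (log N)^{α} / N for infinitely many N. -/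
open scoped Classical
open MeasureTheory Filter

/-- Local discrepancy function of a finite point set `x : Fin N → Fin d → ℝ` in `[0,1)^d`. -/
noncomputable def locDiscFin (d N : ℕ) (x : Fin N → Fin d → ℝ) (t : Fin d → ℝ) : ℝ :=
  ((Finset.univ.filter fun n => ∀ j, x n j < t j).card : ℝ) / N - ∏ j, t j

/-- Local discrepancy function of the first `N` terms of a sequence in `[0,1)^d`. -/
noncomputable def locDiscSeq (d : ℕ) (x : ℕ → Fin d → ℝ) (N : ℕ) (t : Fin d → ℝ) : ℝ :=
  (((Finset.range N).filter fun n => ∀ j, x n j < t j).card : ℝ) / N - ∏ j, t j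

/-- The measure on `[0,1]^d` used for `L_p` discrepancy. -/
noncomputable def cubeMeasure (d : ℕ) : Measure (Fin d → ℝ) :=
  volume.restrict (Set.univ.pi fun _ : Fin d => Set.Icc (0 : ℝ) 1)

lemma cube_measurable (d : ℕ) :
    MeasurableSet (Set.univ.pi fun _ : Fin d => Set.Icc (0 : ℝ) 1) :=
  MeasurableSet.univ_pi fun _ => measurableSet_Icc

instance cubeMeasure_prob (d : ℕ) : IsProbabilityMeasure (cubeMeasure d) := by
  constructor
  rw [cubeMeasure, Measure.restrict_apply_univ, volume_pi_pi]
  simp [Real.volume_Icc]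

instance icc_prob : IsProbabilityMeasure (volume.restrict (Set.Icc (0:ℝ) 1)) := by
  constructor
  rw [Measure.restrict_apply_univ]
  simp [Real.volume_Icc]

lemma measurable_locDiscSeq (d N : ℕ) (x : ℕ → Fin d → ℝ) : Measurable (locDiscSeq d x N) := by
  unfold locDiscSeq
  refine Measurable.sub (Measurable.div_const ?_ _)
    (Finset.measurable_prod _ fun j _ => measurable_pi_apply j)
  have h : (fun t : Fin d → ℝ => (((Finset.range N).filter fun n => ∀ j, x n j < t j).card : ℝ))
      = fun t => ∑ n ∈ Finset.range N, if ∀ j, x n j < t j then (1:ℝ) else 0 := by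
    funext t
    rw [Finset.card_filter]
    push_cast
    rfl
  rw [h]
  refine Finset.measurable_sum _ fun n _ => Measurable.ite ?_ measurable_const measurable_const
  have h2 : {t : Fin d → ℝ | ∀ j, x n j < t j}
      = ⋂ j, (fun t : Fin d → ℝ => t j) ⁻¹' Set.Ioi (x n j) := by
    ext t; simp
  rw [h2]
  exact MeasurableSet.iInter fun j => (measurable_pi_apply j) measurableSet_Ioi

lemma measurable_locDiscFin (d N : ℕ) (x : Fin N → Fin d → ℝ) :
    Measurable (locDiscFin d N x) := by
  unfold locDiscFin
  refine Measurable.sub (Measurable.div_const ?_ _)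
    (Finset.measurable_prod _ fun j _ => measurable_pi_apply j)
  have h : (fun t : Fin d → ℝ => ((Finset.univ.filter fun n : Fin N => ∀ j, x n j < t j).card : ℝ))
      = fun t => ∑ n : Fin N, if ∀ j, x n j < t j then (1:ℝ) else 0 := by
    funext t
    rw [Finset.card_filter]
    push_cast
    rfl
  rw [h]
  refine Finset.measurable_sum _ fun n _ => Measurable.ite ?_ measurable_const measurable_const
  have h2 : {t : Fin d → ℝ | ∀ j, x n j < t j}
      = ⋂ j, (fun t : Fin d → ℝ => t j) ⁻¹' Set.Ioi (x n j) := by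
    ext t; simp
  rw [h2]
  exact MeasurableSet.iInter fun j => (measurable_pi_apply j) measurableSet_Ioi

lemma card_fin_filter (N : ℕ) (p : ℕ → Prop) :
    (Finset.univ.filter fun n : Fin N => p n.val).card
      = ((Finset.range N).filter p).card := by
  refine Finset.card_bij' (fun n _ => n.val) (fun n hn => ⟨n, by
    simp only [Finset.mem_filter, Finset.mem_range] at hn; exact hn.1⟩) ?_ ?_ ?_ ?_
  · intro a ha
    simp only [Finset.mem_filter, Finset.mem_univ, true_and] at ha
    simp [Finset.mem_filter, Finset.mem_range, a.isLt, ha]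
  · intro a ha
    simp only [Finset.mem_filter, Finset.mem_range] at ha
    simp [ha.2]
  · intro a _; rfl
  · intro a _; rfl

lemma aux_fubini {X Y : Type*} [MeasurableSpace X] [MeasurableSpace Y]
    (p : ENNReal) (hp : p ≠ 0) (μ : Measure X) [IsProbabilityMeasure μ]
    (ν : Measure Y) [SFinite ν] (F : X × Y → ℝ) (hF : Measurable F) (K : ENNReal)
    (h : ∀ᵐ u ∂μ, eLpNorm (fun t => F (u, t)) p ν ≤ K) :
    eLpNorm F p (μ.prod ν) ≤ K := by
  by_cases hptop : p = ⊤
  · subst hptop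
    simp only [eLpNorm_exponent_top] at h ⊢
    have hae : ∀ᵐ z ∂μ.prod ν, (‖F z‖₊ : ENNReal) ≤ K := by
      rw [Measure.ae_prod_iff_ae_ae]
      · refine h.mono fun u hu => ?_
        exact (ae_le_eLpNormEssSup (f := fun t => F (u, t)) (μ := ν)).mono fun t ht =>
          ht.trans hu
      · exact measurableSet_le ((measurable_coe_nnreal_ennreal.comp hF.nnnorm)) measurable_const
    exact essSup_le_of_ae_le _ hae
  · have hr : 0 < p.toReal := ENNReal.toReal_pos hp hptop
    rw [eLpNorm_eq_lintegral_rpow_enorm_toReal hp hptop]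
    have hmeas : AEMeasurable (fun z => ‖F z‖ₑ ^ p.toReal) (μ.prod ν) :=
      ((measurable_coe_nnreal_ennreal.comp hF.nnnorm).pow_const _).aemeasurable
    rw [lintegral_prod _ hmeas]
    have hinner : ∀ᵐ u ∂μ, (∫⁻ t, ‖F (u, t)‖ₑ ^ p.toReal ∂ν) ≤ K ^ p.toReal := by
      refine h.mono fun u hu => ?_
      rw [eLpNorm_eq_lintegral_rpow_enorm_toReal hp hptop] at hu
      have h2 := ENNReal.rpow_le_rpow hu hr.le
      rwa [← ENNReal.rpow_mul, one_div, inv_mul_cancel₀ hr.ne', ENNReal.rpow_one] at h2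
    calc (∫⁻ u, (∫⁻ t, ‖F (u, t)‖ₑ ^ p.toReal ∂ν) ∂μ) ^ (1 / p.toReal)
        ≤ (∫⁻ _, K ^ p.toReal ∂μ) ^ (1 / p.toReal) :=
          ENNReal.rpow_le_rpow (lintegral_mono_ae hinner) (by positivity)
      _ = K := by
          rw [lintegral_const, measure_univ, mul_one, ← ENNReal.rpow_mul,
            mul_one_div_cancel hr.ne', ENNReal.rpow_one]

lemma map_cube (s : ℕ) :
    Measure.map (MeasurableEquiv.piFinSuccAbove (fun _ : Fin (s+1) => ℝ) 0)
        (cubeMeasure (s+1))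
      = (volume.restrict (Set.Icc (0:ℝ) 1)).prod (cubeMeasure s) := by
  rw [cubeMeasure, cubeMeasure]
  set e := MeasurableEquiv.piFinSuccAbove (fun _ : Fin (s+1) => ℝ) 0
  have hpre : e ⁻¹' ((Set.Icc (0:ℝ) 1) ×ˢ (Set.univ.pi fun _ : Fin s => Set.Icc (0 : ℝ) 1))
      = Set.univ.pi fun _ : Fin (s+1) => Set.Icc (0 : ℝ) 1 := by
    ext f
    simp only [e, Set.mem_preimage, MeasurableEquiv.piFinSuccAbove_apply, Set.mem_prod,
      Set.mem_pi, Set.mem_univ, forall_true_left, Fin.removeNth]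
    constructor
    · rintro ⟨h0, hs⟩ j
      rcases Fin.eq_zero_or_eq_succ j with rfl | ⟨k, rfl⟩
      · exact h0
      · simpa [Fin.succAbove, Fin.tail] using hs k
    · intro h
      exact ⟨h 0, fun k => h _⟩
  have h1 : (volume.restrict (Set.Icc (0:ℝ) 1)).prod
          (volume.restrict (Set.univ.pi fun _ : Fin s => Set.Icc (0 : ℝ) 1))
      = (volume : Measure (ℝ × (Fin s → ℝ))).restrict
          ((Set.Icc (0:ℝ) 1) ×ˢ (Set.univ.pi fun _ : Fin s => Set.Icc (0 : ℝ) 1)) := by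
    rw [Measure.prod_restrict, ← Measure.volume_eq_prod]
  rw [h1, ← hpre, ← Measure.restrict_map e.measurable
      ((measurableSet_Icc.prod (MeasurableSet.univ_pi fun _ => measurableSet_Icc)))]
  congr 1
  exact (volume_preserving_piFinSuccAbove (fun _ : Fin (s+1) => ℝ) 0).map_eq

lemma triv_bound (s m : ℕ) (x : ℕ → Fin s → ℝ) (p : ENNReal) :
    eLpNorm (locDiscSeq s x m) p (cubeMeasure s) ≤ ENNReal.ofReal 1 := by
  have hae : ∀ᵐ t ∂(cubeMeasure s), ‖locDiscSeq s x m t‖ ≤ 1 := by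
    filter_upwards [self_mem_ae_restrict (cube_measurable s)] with t ht
    rw [Real.norm_eq_abs, locDiscSeq]
    have hP0 : 0 ≤ ∏ j, t j := Finset.prod_nonneg fun j _ => (ht j trivial).1
    have hP1 : ∏ j, t j ≤ 1 :=
      Finset.prod_le_one (fun j _ => (ht j trivial).1) fun j _ => (ht j trivial).2
    have hA0 : (0:ℝ) ≤ (((Finset.range m).filter fun n => ∀ j, x n j < t j).card : ℝ) / m := by
      positivity
    have hA1 : (((Finset.range m).filter fun n => ∀ j, x n j < t j).card : ℝ) / m ≤ 1 := by
      apply div_le_one_of_le₀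
      · exact_mod_cast (Finset.card_filter_le _ _).trans (le_of_eq (Finset.card_range m))
      · positivity
    rw [abs_le]
    constructor <;> linarith
  have h := eLpNorm_le_of_ae_bound (p := p) (μ := cubeMeasure s) hae
  simpa using h

lemma slice_bound (s N : ℕ) (hN : 0 < N) (x : ℕ → Fin s → ℝ) (u : ℝ)
    (hu : u ∈ Set.Icc (0:ℝ) 1) (t : Fin s → ℝ)
    (ht : t ∈ Set.univ.pi fun _ : Fin s => Set.Icc (0:ℝ) 1) :
    |locDiscFin (s+1) N (fun n => Fin.cons ((n.val:ℝ)/N) (x n.val)) (Fin.cons u t)|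
      ≤ ((⌈u * N⌉₊ : ℝ) / N) * |locDiscSeq s x ⌈u * N⌉₊ t| + 1/N := by
  set m := ⌈u * N⌉₊ with hm
  have hNR : (0:ℝ) < N := by exact_mod_cast hN
  have hmN : m ≤ N := Nat.ceil_le.mpr (by nlinarith [hu.1, hu.2])
  have hpred : ∀ n : Fin N, (∀ j : Fin (s+1),
      (Fin.cons ((n.val:ℝ)/N) (x n.val) : Fin (s+1) → ℝ) j
        < (Fin.cons u t : Fin (s+1) → ℝ) j) ↔ (n.val < m ∧ ∀ j, x n.val j < t j) := by
    intro n
    rw [Fin.forall_fin_succ]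
    simp only [Fin.cons_zero, Fin.cons_succ]
    constructor
    · rintro ⟨h0, hs'⟩; exact ⟨Nat.lt_ceil.mpr ((div_lt_iff₀ hNR).mp h0), hs'⟩
    · rintro ⟨h0, hs'⟩; exact ⟨(div_lt_iff₀ hNR).mpr (Nat.lt_ceil.mp h0), hs'⟩
  have hcount : (Finset.univ.filter fun n : Fin N => ∀ j : Fin (s+1),
        (Fin.cons ((n.val:ℝ)/N) (x n.val) : Fin (s+1) → ℝ) j
          < (Fin.cons u t : Fin (s+1) → ℝ) j).card
      = ((Finset.range m).filter fun n => ∀ j, x n j < t j).card := by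
    refine Finset.card_bij' (fun n _ => n.val)
      (fun k hk => ⟨k, lt_of_lt_of_le (Finset.mem_range.mp (Finset.mem_filter.mp hk).1) hmN⟩)
      ?_ ?_ ?_ ?_
    · intro a ha
      simp only [Finset.mem_filter, Finset.mem_univ, true_and] at ha
      rw [hpred a] at ha
      simp only [Finset.mem_filter, Finset.mem_range]
      exact ⟨ha.1, ha.2⟩
    · intro a ha
      simp only [Finset.mem_filter, Finset.mem_range] at ha
      simp only [Finset.mem_filter, Finset.mem_univ, true_and]
      exact (hpred ⟨a, lt_of_lt_of_le ha.1 hmN⟩).mpr ⟨ha.1, ha.2⟩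
    · intro a _; rfl
    · intro a _; rfl
  set A : ℝ := (((Finset.range m).filter fun n => ∀ j, x n j < t j).card : ℝ) with hA
  set P : ℝ := ∏ j, t j with hP
  have hP0 : 0 ≤ P := Finset.prod_nonneg fun j _ => (ht j trivial).1
  have hP1 : P ≤ 1 := Finset.prod_le_one (fun j _ => (ht j trivial).1) fun j _ => (ht j trivial).2
  have hLHS : locDiscFin (s+1) N (fun n => Fin.cons ((n.val:ℝ)/N) (x n.val)) (Fin.cons u t)
      = A / N - u * P := by
    rw [locDiscFin, hcount, Fin.prod_univ_succ]
    simp [hP, hA]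
  have hSeq : locDiscSeq s x m t = A / m - P := rfl
  rw [hLHS, hSeq]
  rcases Nat.eq_zero_or_pos m with hm0 | hm1
  · have hu0 : u = 0 := by
      have := Nat.ceil_eq_zero.mp (hm ▸ hm0)
      nlinarith [hu.1]
    have hA0 : A = 0 := by rw [hA, hm0]; simp
    rw [hu0, hA0]
    simp
    positivity
  · have hmR : (0:ℝ) < m := by exact_mod_cast hm1
    have key : A / N - u * P = ((m:ℝ)/N) * (A/m - P) + ((m:ℝ)/N - u) * P := by
      field_simp
      ring
    rw [key]
    have h1 : |((m:ℝ)/N) * (A/m - P)| = ((m:ℝ)/N) * |A/m - P| := by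
      rw [abs_mul, abs_of_nonneg (by positivity)]
    have hceil1 : u * N ≤ m := Nat.le_ceil _
    have hceil2 : (m:ℝ) < u * N + 1 := Nat.ceil_lt_add_one (by nlinarith [hu.1])
    have h2 : |((m:ℝ)/N - u) * P| ≤ 1/N := by
      rw [abs_mul]
      have e0 : u ≤ (m:ℝ)/N := by rw [le_div_iff₀ hNR]; exact hceil1
      have e1 : (m:ℝ)/N - u ≤ 1/N := by
        rw [div_sub' hNR.ne', div_le_div_iff₀ hNR hNR]; nlinarith
      have habs : |(m:ℝ)/N - u| ≤ 1/N := by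
        rw [abs_le]
        have : (0:ℝ) ≤ 1/N := by positivity
        constructor <;> linarith
      calc |(m:ℝ)/N - u| * |P| ≤ (1/N) * 1 := by
            apply mul_le_mul habs _ (abs_nonneg _) (by positivity)
            rw [abs_of_nonneg hP0]; exact hP1
        _ = 1/N := mul_one _
    calc |((m:ℝ)/N) * (A/m - P) + ((m:ℝ)/N - u) * P|
        ≤ |((m:ℝ)/N) * (A/m - P)| + |((m:ℝ)/N - u) * P| := abs_add_le _ _
      _ ≤ ((m:ℝ)/N) * |A/m - P| + 1/N := by rw [h1]; linarith

set_option maxHeartbeats 2000000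

/-- Proĭnov's transference principle: a lower bound `c (log N)^α / N` for the `L_p`
discrepancy of all finite point sets in dimension `s+1` transfers to a lower bound
`C (log N)^α / N`, for infinitely many `N`, for the `L_p` discrepancy of every infinite
sequence in dimension `s`. -/
theorem proinov_transference (s : ℕ) (hs : 1 ≤ s) (p : ENNReal) (hp : 1 ≤ p)
    (α : ℝ) (hα : 0 < α) (c : ℝ) (hc : 0 < c)
    (hfin : ∀ N : ℕ, 2 ≤ N → ∀ x : Fin N → Fin (s + 1) → ℝ,
      (∀ n j, x n j ∈ Set.Ico (0 : ℝ) 1) →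
      ENNReal.ofReal (c * (Real.log N) ^ α / N) ≤
        eLpNorm (locDiscFin (s + 1) N x) p (cubeMeasure (s + 1))) :
    ∃ C : ℝ, 0 < C ∧ ∀ x : ℕ → Fin s → ℝ, (∀ n j, x n j ∈ Set.Ico (0 : ℝ) 1) →
      ∀ M : ℕ, ∃ N : ℕ, M ≤ N ∧ 2 ≤ N ∧
        ENNReal.ofReal (C * (Real.log N) ^ α / N) ≤
          eLpNorm (locDiscSeq s x N) p (cubeMeasure s) := by
  refine ⟨c/2, by positivity, ?_⟩
  intro x hx M
  by_contra hcontra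
  push_neg at hcontra
  have hp0 : p ≠ 0 := (lt_of_lt_of_le zero_lt_one hp).ne'
  set M₀ : ℕ := max M 2 with hM₀
  set B : ℝ := max (2 * ((M₀:ℝ) + 1) / c) 1 with hB
  set T : ℝ := B ^ (α⁻¹) with hT
  set N : ℕ := max M₀ ⌈Real.exp (T + 1)⌉₊ with hN
  have hB1 : (1:ℝ) ≤ B := le_max_right _ _
  have hT0 : 0 < T := Real.rpow_pos_of_pos (by linarith) _
  have hexpN : Real.exp (T + 1) ≤ N := by
    calc Real.exp (T+1) ≤ (⌈Real.exp (T+1)⌉₊ : ℝ) := Nat.le_ceil _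
      _ ≤ N := by exact_mod_cast le_max_right M₀ _
  have h2R : (2:ℝ) ≤ N := by
    have := Real.add_one_le_exp (T+1)
    linarith
  have hN2 : 2 ≤ N := by exact_mod_cast h2R
  have hNpos : 0 < N := by omega
  have hNR : (0:ℝ) < N := by exact_mod_cast hNpos
  have hM₀N : M₀ ≤ N := le_max_left _ _
  have hlogN : T + 1 ≤ Real.log N := (Real.le_log_iff_exp_le (by linarith)).mpr hexpN
  have hlog0 : 0 ≤ Real.log N := by linarith
  have hL : B < Real.log N ^ α := by
    have h1 : T ^ α < Real.log N ^ α := Real.rpow_lt_rpow hT0.le (by linarith) hα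
    rwa [hT, Real.rpow_inv_rpow (by linarith) hα.ne'] at h1
  have hLpos : 0 ≤ Real.log N ^ α := Real.rpow_nonneg hlog0 _
  have hcK : 0 ≤ c/2 * Real.log N ^ α := by positivity
  -- the finite point set
  set y : Fin N → Fin (s+1) → ℝ := fun n => Fin.cons ((n.val:ℝ)/N) (x n.val) with hy
  have hyrange : ∀ n j, y n j ∈ Set.Ico (0:ℝ) 1 := by
    intro n j
    refine Fin.cases ?_ ?_ j
    · simp only [hy, Fin.cons_zero]
      constructor
      · positivity
      · rw [div_lt_one hNR]; exact_mod_cast n.isLt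
    · intro k
      simp only [hy, Fin.cons_succ]
      exact hx n.val k
  have hlow := hfin N hN2 y hyrange
  -- transfer to product space
  set G : ℝ × (Fin s → ℝ) → ℝ := fun z => locDiscFin (s+1) N y (Fin.cons z.1 z.2) with hG
  have hGmeas : Measurable G := by
    apply (measurable_locDiscFin (s+1) N y).comp
    rw [measurable_pi_iff]
    intro j
    refine Fin.cases ?_ ?_ j
    · simpa using (measurable_fst : Measurable fun z : ℝ × (Fin s → ℝ) => z.1)
    · intro k
      simpa [Function.comp_def] using (measurable_pi_apply k).comp (measurable_snd : Measurable fun z : ℝ × (Fin s → ℝ) => z.2)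
  have hcomp : locDiscFin (s+1) N y = G ∘ (MeasurableEquiv.piFinSuccAbove (fun _ : Fin (s+1) => ℝ) 0) := by
    funext f
    simp only [hG, Function.comp_apply, MeasurableEquiv.piFinSuccAbove_apply,
      Fin.insertNthEquiv, Equiv.coe_fn_symm_mk, Fin.removeNth_zero, Fin.cons_self_tail]
  have htrans : eLpNorm (locDiscFin (s+1) N y) p (cubeMeasure (s+1))
      = eLpNorm G p ((volume.restrict (Set.Icc (0:ℝ) 1)).prod (cubeMeasure s)) := by
    rw [hcomp, ← map_cube s]
    exact (eLpNorm_map_measure (by rw [map_cube s]; exact hGmeas.aestronglyMeasurable)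
      (MeasurableEquiv.piFinSuccAbove (fun _ : Fin (s+1) => ℝ) 0).measurable.aemeasurable).symm
  -- the upper bound
  have hupper : eLpNorm G p ((volume.restrict (Set.Icc (0:ℝ) 1)).prod (cubeMeasure s))
      ≤ ENNReal.ofReal ((c/2 * Real.log N ^ α + ((M₀:ℝ) + 1)) / N) := by
    refine aux_fubini p hp0 _ _ G hGmeas _ ?_
    filter_upwards [self_mem_ae_restrict measurableSet_Icc] with u hu
    set m : ℕ := ⌈u * N⌉₊ with hm
    have hmN : m ≤ N := Nat.ceil_le.mpr (by nlinarith [hu.1, hu.2])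
    have hmono : eLpNorm (fun t => G (u, t)) p (cubeMeasure s)
        ≤ eLpNorm (fun t => ((m:ℝ)/N) * |locDiscSeq s x m t| + 1/N) p (cubeMeasure s) := by
      refine eLpNorm_mono_ae ?_
      filter_upwards [self_mem_ae_restrict (cube_measurable s)] with t ht
      have hb := slice_bound s N hNpos x u hu t ht
      rw [← hy] at hb
      rw [Real.norm_eq_abs, Real.norm_eq_abs,
        abs_of_nonneg (by positivity : (0:ℝ) ≤ ((m:ℝ)/N) * |locDiscSeq s x m t| + 1/N)]
      exact hb
    have e1 : eLpNorm (fun t => ((m:ℝ)/N) * |locDiscSeq s x m t|) p (cubeMeasure s)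
        = ENNReal.ofReal ((m:ℝ)/N) * eLpNorm (locDiscSeq s x m) p (cubeMeasure s) := by
      rw [show (fun t => ((m:ℝ)/N) * |locDiscSeq s x m t|)
          = ((m:ℝ)/N) • (fun t => |locDiscSeq s x m t|) from rfl]
      rw [eLpNorm_const_smul, Real.enorm_eq_ofReal (by positivity)]
      congr 1
      rw [show (fun t => |locDiscSeq s x m t|) = (fun t => ‖locDiscSeq s x m t‖) from by
        funext t; rw [Real.norm_eq_abs]]
      exact eLpNorm_norm _
    have e2 : eLpNorm (fun _ : Fin s → ℝ => (1/N : ℝ)) p (cubeMeasure s)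
        = ENNReal.ofReal (1/N) := by
      rw [eLpNorm_const _ hp0 (IsProbabilityMeasure.ne_zero _), measure_univ,
        ENNReal.one_rpow, mul_one, Real.enorm_eq_ofReal (by positivity)]
    have hstep2 : eLpNorm (fun t => ((m:ℝ)/N) * |locDiscSeq s x m t| + 1/N) p (cubeMeasure s)
        ≤ ENNReal.ofReal ((m:ℝ)/N) * eLpNorm (locDiscSeq s x m) p (cubeMeasure s)
            + ENNReal.ofReal (1/N) := by
      have hmeas1 : AEStronglyMeasurable (fun t => ((m:ℝ)/N) * |locDiscSeq s x m t|)
          (cubeMeasure s) :=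
        (((measurable_locDiscSeq s m x).abs).const_mul _).aestronglyMeasurable
      refine le_trans (eLpNorm_add_le hmeas1 aestronglyMeasurable_const hp) ?_
      rw [e1, e2]
    have hbound : ENNReal.ofReal ((m:ℝ)/N) * eLpNorm (locDiscSeq s x m) p (cubeMeasure s)
          + ENNReal.ofReal (1/N)
        ≤ ENNReal.ofReal ((c/2 * Real.log N ^ α + ((M₀:ℝ) + 1)) / N) := by
      rcases lt_or_ge m M₀ with hmM | hmM
      · have htriv := triv_bound s m x p
        calc ENNReal.ofReal ((m:ℝ)/N) * eLpNorm (locDiscSeq s x m) p (cubeMeasure s)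
              + ENNReal.ofReal (1/N)
            ≤ ENNReal.ofReal ((m:ℝ)/N) * ENNReal.ofReal 1 + ENNReal.ofReal (1/N) := by
              gcongr
          _ = ENNReal.ofReal ((m:ℝ)/N + 1/N) := by
              rw [ENNReal.ofReal_one, mul_one,
                ← ENNReal.ofReal_add (by positivity) (by positivity)]
          _ ≤ ENNReal.ofReal ((c/2 * Real.log N ^ α + ((M₀:ℝ) + 1)) / N) := by
              apply ENNReal.ofReal_le_ofReal
              rw [← add_div]
              have hmc : (m:ℝ) ≤ (M₀:ℝ) := by exact_mod_cast hmM.le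
              rw [div_le_div_iff₀ hNR hNR]
              nlinarith
      · have hm2 : 2 ≤ m := le_trans (le_max_right M 2) hmM
        have hmM' : M ≤ m := le_trans (le_max_left M 2) hmM
        have hcm := (hcontra m hmM' hm2).le
        have hmR : (0:ℝ) < m := by exact_mod_cast (by omega : 0 < m)
        have h1m : (1:ℝ) ≤ m := by exact_mod_cast (by omega : 1 ≤ m)
        have hlogm : 0 ≤ Real.log m := Real.log_nonneg h1m
        have hlogmN : Real.log m ^ α ≤ Real.log N ^ α :=
          Real.rpow_le_rpow hlogm (Real.log_le_log hmR (by exact_mod_cast hmN)) hα.le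
        calc ENNReal.ofReal ((m:ℝ)/N) * eLpNorm (locDiscSeq s x m) p (cubeMeasure s)
              + ENNReal.ofReal (1/N)
            ≤ ENNReal.ofReal ((m:ℝ)/N) * ENNReal.ofReal (c/2 * Real.log m ^ α / m)
                + ENNReal.ofReal (1/N) := by gcongr
          _ = ENNReal.ofReal ((m:ℝ)/N * (c/2 * Real.log m ^ α / m) + 1/N) := by
              rw [← ENNReal.ofReal_mul (by positivity),
                ← ENNReal.ofReal_add (by positivity) (by positivity)]
          _ ≤ ENNReal.ofReal ((c/2 * Real.log N ^ α + ((M₀:ℝ) + 1)) / N) := by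
              apply ENNReal.ofReal_le_ofReal
              have heq : (m:ℝ)/N * (c/2 * Real.log m ^ α / m) = c/2 * Real.log m ^ α / N := by
                field_simp
              rw [heq, ← add_div]
              have hc2 : c/2 * Real.log m ^ α ≤ c/2 * Real.log N ^ α :=
                mul_le_mul_of_nonneg_left hlogmN (by linarith)
              have hM0nn : (0:ℝ) ≤ (M₀:ℝ) := by positivity
              rw [div_le_div_iff₀ hNR hNR]
              nlinarith
    exact hmono.trans (hstep2.trans hbound)
  -- conclude
  rw [htrans] at hlow
  have hfinal := hlow.trans hupper
  have hM0nn' : (0:ℝ) ≤ (M₀:ℝ) := Nat.cast_nonneg _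
  have hreal : c * Real.log N ^ α / N ≤ (c/2 * Real.log N ^ α + ((M₀:ℝ) + 1)) / N :=
    (ENNReal.ofReal_le_ofReal_iff (div_nonneg (by linarith) hNR.le)).mp hfinal
  have hreal2 : c * Real.log N ^ α ≤ c/2 * Real.log N ^ α + ((M₀:ℝ) + 1) := by
    rw [div_le_div_iff₀ hNR hNR] at hreal
    nlinarith
  have hABS : (M₀:ℝ) + 1 < c/2 * Real.log N ^ α := by
    have hBge : 2 * ((M₀:ℝ) + 1) / c ≤ B := le_max_left _ _
    have h2 : 2*((M₀:ℝ)+1)/c < Real.log N ^ α := lt_of_le_of_lt hBge hL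
    calc (M₀:ℝ)+1 = c/2 * (2*((M₀:ℝ)+1)/c) := by field_simp
      _ < c/2 * Real.log N ^ α := by
          exact mul_lt_mul_of_pos_left h2 (by positivity)
  linarith
end
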